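/- arXiv:1005.2229 — 3 statements merged into one kernel-verified Lean document; each statement's English description precedes it below -/
import Mathlib

section
/- Every quasitrace on a finite-dimensional C*-algebra is a linear trace. -/
open scoped ComplexOrder

/-- The defining properties of a quasitrace on a (possibly nonunital) complex *-algebra,
except for the condition of extendability to 2×2 matrices: positivity, the trace
condition `τ(x*x) = τ(xx*)`, additivity `τ(x+iy) = τ(x)+iτ(y)` for self-adjoint `x, y`,
and linearity on commutative C*-subalgebras (rendered as additivity on commuting
self-adjoint elements together with scalar homogeneity). -/
def IsQuasitraceAux {B : Type*} [NonUnitalRing B] [StarRing B] [Module ℂ B] (σ : B → ℂ) : Prop :=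
  (∀ x : B, 0 ≤ σ (star x * x)) ∧
  (∀ x : B, σ (star x * x) = σ (x * star x)) ∧
  (∀ x y : B, IsSelfAdjoint x → IsSelfAdjoint y →
    σ (x + Complex.I • y) = σ x + Complex.I * σ y) ∧
  (∀ x y : B, IsSelfAdjoint x → IsSelfAdjoint y → Commute x y →
    σ (x + y) = σ x + σ y) ∧
  (∀ (c : ℂ) (x : B), IsSelfAdjoint x → σ (c • x) = c * σ x)

/-- A (2-)quasitrace: the quasitrace properties together with an extension to `M₂(A)`
with the same properties. -/
def IsQuasitrace {A : Type*} [NonUnitalRing A] [StarRing A] [Module ℂ A] (τ : A → ℂ) : Prop :=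
  IsQuasitraceAux τ ∧
    ∃ σ : Matrix (Fin 2) (Fin 2) A → ℂ, IsQuasitraceAux σ ∧
      ∀ a : A, σ (Matrix.single 0 0 a) = τ a

/-- A trace: a positive linear functional satisfying `τ(ab) = τ(ba)`. -/
def IsTrace {A : Type*} [NonUnitalRing A] [StarRing A] [Module ℂ A] (τ : A →ₗ[ℂ] ℂ) : Prop :=
  (∀ x : A, 0 ≤ τ (star x * x)) ∧ ∀ x y : A, τ (x * y) = τ (y * x)

set_option linter.unusedSectionVars false

lemma qtSpecFinite {A : Type*} [CStarAlgebra A] [FiniteDimensional ℂ A] (a : A) :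
    (spectrum ℝ a).Finite := by
  rw [← spectrum.preimage_algebraMap ℂ]
  rcases subsingleton_or_nontrivial A with h | h
  · have : spectrum ℂ a = ∅ := by
      rw [Set.eq_empty_iff_forall_notMem]
      intro z hz
      exact hz (isUnit_of_subsingleton _)
    simp [this]
  · have hi : IsIntegral ℂ a := Algebra.IsIntegral.isIntegral a
    have hfin : {x : ℂ | (minpoly ℂ a).IsRoot x}.Finite :=
      Polynomial.finite_setOf_isRoot (minpoly.ne_zero hi)
    refine (hfin.subset ?_).preimage ((algebraMap ℝ ℂ).injective.injOn)
    intro lam hlam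
    have hmap := spectrum.map_polynomial_aeval a (minpoly ℂ a)
    rw [minpoly.aeval ℂ a] at hmap
    have : (minpoly ℂ a).eval lam ∈ spectrum ℂ (0 : A) := by
      rw [hmap]; exact ⟨lam, hlam, rfl⟩
    simpa [spectrum.zero_eq] using this

lemma qtContOn {A : Type*} [CStarAlgebra A] [FiniteDimensional ℂ A] (a : A) (f : ℝ → ℝ) :
    ContinuousOn f (spectrum ℝ a) := by
  rw [continuousOn_iff_continuous_restrict]
  haveI : Finite (spectrum ℝ a) := (qtSpecFinite a).to_subtype
  haveI : DiscreteTopology (spectrum ℝ a) := Finite.instDiscreteTopology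
  exact continuous_of_discreteTopology

/-- Spectral decomposition of a self-adjoint element in a f.d. C*-algebra. -/
theorem qtSpectral {A : Type*} [CStarAlgebra A] [FiniteDimensional ℂ A]
    (h : A) (hsa : IsSelfAdjoint h) :
    ∃ (S : Finset ℝ) (p : ℝ → A),
      (∀ l ∈ S, IsSelfAdjoint (p l) ∧ p l * p l = p l) ∧
      (∀ l m, l ≠ m → p l * p m = 0) ∧
      (h = ∑ l ∈ S, (l : ℝ) • p l) ∧
      (∀ l ∈ S, l ≠ 0 → ∀ P : A, P * h = h → h * P = h → P * p l = p l ∧ p l * P = p l) := by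
  classical
  have hfin : (spectrum ℝ h).Finite := qtSpecFinite h
  refine ⟨hfin.toFinset, fun l => cfc (fun t => if t = l then (1:ℝ) else 0) h, ?_, ?_, ?_, ?_⟩
  · intro l _
    refine ⟨cfc_predicate _ _, ?_⟩
    rw [← cfc_mul _ _ h (qtContOn h _) (qtContOn h _)]
    apply cfc_congr
    intro t _
    simp only []
    split_ifs <;> simp
  · intro l m hlm
    rw [← cfc_mul _ _ h (qtContOn h _) (qtContOn h _)]
    have h0 : cfc (0 : ℝ → ℝ) h = 0 := cfc_zero ℝ h
    rw [← h0]
    apply cfc_congr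
    intro t _
    simp only [Pi.zero_apply]
    split_ifs with h1 h2
    · exact absurd (h1 ▸ h2 : (l:ℝ) = m)  hlm
    · simp
    · simp
    · simp
  · simp only []
    have step : ∀ l ∈ hfin.toFinset, (l : ℝ) • cfc (fun t => if t = l then (1:ℝ) else 0) h
        = cfc (fun t => l • (if t = l then (1:ℝ) else 0)) h := by
      intro l _
      exact (cfc_smul (l : ℝ) _ h (qtContOn h _)).symm
    rw [Finset.sum_congr rfl step,
      ← cfc_sum (fun (l : ℝ) (t : ℝ) => l • (if t = l then (1:ℝ) else 0)) h _
        (fun i _ => qtContOn h _)]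
    conv_lhs => rw [← cfc_id ℝ h]
    apply cfc_congr
    intro t ht
    have htS : t ∈ hfin.toFinset := hfin.mem_toFinset.mpr ht
    simp only [id_eq, Finset.sum_apply]
    rw [Finset.sum_eq_single t]
    · simp
    · intro l _ hlt
      simp [Ne.symm hlt]
    · intro habs
      exact absurd htS habs
  · intro l hl hl0 P hPh hhP
    have hfg : (fun t => if t = l then (1:ℝ) else 0)
        = fun t => ((if t = l then (1:ℝ) else 0) / t) * t := by
      funext t
      by_cases htl : t = l
      · subst htl; simp [div_mul_cancel₀, hl0]
      · simp [htl]
    have hgf : (fun t => if t = l then (1:ℝ) else 0)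
        = fun t => t * ((if t = l then (1:ℝ) else 0) / t) := by
      funext t
      by_cases htl : t = l
      · subst htl; simp; exact (mul_inv_cancel₀ hl0).symm
      · simp [htl]
    have key : cfc (fun t => if t = l then (1:ℝ) else 0) h
        = cfc (fun t => (if t = l then (1:ℝ) else 0) / t) h * h := by
      conv_lhs => rw [hfg]
      rw [cfc_mul _ _ h (qtContOn h _) (qtContOn h _), cfc_id' ℝ h]
    have key2 : cfc (fun t => if t = l then (1:ℝ) else 0) h
        = h * cfc (fun t => (if t = l then (1:ℝ) else 0) / t) h := by
      conv_lhs => rw [hgf]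
      rw [cfc_mul _ _ h (qtContOn h _) (qtContOn h _), cfc_id' ℝ h]
    constructor
    · show P * cfc _ h = cfc _ h
      rw [key2, ← mul_assoc, hPh, ← key2]
    · show cfc _ h * P = cfc _ h
      rw [key, mul_assoc, hhP, ← key]

section QTlemmas
variable {A : Type*} [CStarAlgebra A] [FiniteDimensional ℂ A] {τ : A → ℂ}

lemma qtZero (hτ : IsQuasitraceAux τ) : τ 0 = 0 := by
  have := hτ.2.2.2.2 0 0 (IsSelfAdjoint.zero A)
  simpa using this

lemma qtSum (hτ : IsQuasitraceAux τ) {ι : Type*} (s : Finset ι) (g : ι → A)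
    (sa : ∀ i ∈ s, IsSelfAdjoint (g i))
    (comm : ∀ i ∈ s, ∀ j ∈ s, Commute (g i) (g j)) :
    τ (∑ i ∈ s, g i) = ∑ i ∈ s, τ (g i) := by
  classical
  induction s using Finset.cons_induction with
  | empty => simpa using qtZero hτ
  | cons a s ha ih =>
    rw [Finset.sum_cons, Finset.sum_cons]
    have mem : ∀ i ∈ s, i ∈ Finset.cons a s ha := fun i hi => Finset.mem_cons.mpr (Or.inr hi)
    have hsum_sa : IsSelfAdjoint (∑ i ∈ s, g i) := by
      rw [IsSelfAdjoint, star_sum]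
      exact Finset.sum_congr rfl fun i hi => (sa i (mem i hi)).star_eq
    have hcomm : Commute (g a) (∑ i ∈ s, g i) :=
      Commute.sum_right _ _ _ fun i hi =>
        comm a (Finset.mem_cons_self a s) i (mem i hi)
    rw [hτ.2.2.2.1 _ _ (sa a (Finset.mem_cons_self a s)) hsum_sa hcomm,
      ih (fun i hi => sa i (mem i hi)) (fun i hi j hj => comm i (mem i hi) j (mem j hj))]
end QTlemmas

/-- A minimal projection. -/
def QTMin {A : Type*} [CStarAlgebra A] (q : A) : Prop :=
  IsSelfAdjoint q ∧ q * q = q ∧ q ≠ 0 ∧ ∀ x : A, ∃ c : ℂ, q * x * q = c • q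

noncomputable def qtCorner {A : Type*} [CStarAlgebra A] (P : A) : Submodule ℂ A :=
  LinearMap.range ((LinearMap.mulRight ℂ P).comp (LinearMap.mulLeft ℂ P))

lemma qtCorner_mem {A : Type*} [CStarAlgebra A] {P x : A} :
    x ∈ qtCorner P ↔ ∃ w, P * w * P = x := by
  constructor
  · rintro ⟨w, rfl⟩; exact ⟨w, by simp [LinearMap.mulLeft_apply, LinearMap.mulRight_apply, mul_assoc]⟩
  · rintro ⟨w, rfl⟩; exact ⟨w, by simp [LinearMap.mulLeft_apply, LinearMap.mulRight_apply, mul_assoc]⟩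

lemma qtCorner_lt {A : Type*} [CStarAlgebra A] {P q : A}
    (hP : P * P = P) (hq : q * q = q) (hqP : q * P = q) (hPq : P * q = q) (hne : q ≠ P) :
    qtCorner q < qtCorner P := by
  have hPq1 : ∀ z, P * (q * z) = q * z := fun z => by rw [← mul_assoc, hPq]
  have hqP1 : ∀ z, q * (P * z) = q * z := fun z => by rw [← mul_assoc, hqP]
  have hq1 : ∀ z, q * (q * z) = q * z := fun z => by rw [← mul_assoc, hq]
  have hP1 : ∀ z, P * (P * z) = P * z := fun z => by rw [← mul_assoc, hP]
  constructor
  · rintro x hx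
    obtain ⟨w, rfl⟩ := qtCorner_mem.mp hx
    apply qtCorner_mem.mpr
    exact ⟨q * w * q, by simp only [mul_assoc, hP, hPq, hqP, hq, hPq1, hqP1, hq1, hP1]⟩
  · intro hle
    have hmem : P - q ∈ qtCorner q := hle (qtCorner_mem.mpr ⟨P - q, by
      simp only [mul_sub, sub_mul, mul_assoc, hP, hPq, hqP, hq, hPq1, hqP1, hq1, hP1]⟩)
    obtain ⟨w, hw⟩ := qtCorner_mem.mp hmem
    have h1 : q * (P - q) * q = P - q := by
      conv_lhs => rw [← hw]
      conv_rhs => rw [← hw]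
      simp only [mul_assoc, hq, hq1]
    have h2 : q * (P - q) * q = 0 := by
      simp only [mul_sub, sub_mul, mul_assoc, hP, hPq, hqP, hq, hPq1, hqP1, hq1, hP1, sub_self, zero_mul]
    rw [h2] at h1
    have : P = q := by linear_combination (norm := noncomm_ring) -h1
    exact hne this.symm

theorem qtMinDecomp {A : Type*} [CStarAlgebra A] [FiniteDimensional ℂ A] (P : A)
    (hsa : IsSelfAdjoint P) (hP : P * P = P) :
    ∃ (n : ℕ) (r : Fin n → A),
      (∀ i, QTMin (r i)) ∧ (∀ i j, i ≠ j → r i * r j = 0) ∧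
      (∀ i, r i * P = r i ∧ P * r i = r i) ∧ P = ∑ i, r i := by
  classical
  generalize hN : Module.finrank ℂ (qtCorner P) = N
  induction N using Nat.strong_induction_on generalizing P with
  | _ N ih =>
  by_cases hP0 : P = 0
  · exact ⟨0, fun i => i.elim0, fun i => i.elim0, fun i => i.elim0,
      fun i => i.elim0, by simp [hP0]⟩
  by_cases hmin : ∀ x : A, ∃ c : ℂ, P * x * P = c • P
  · refine ⟨1, fun _ => P, fun _ => ⟨hsa, hP, hP0, hmin⟩, fun i j hij => absurd (Subsingleton.elim i j) hij,
      fun _ => ⟨hP, hP⟩, by simp⟩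
  push_neg at hmin
  obtain ⟨x, hx⟩ := hmin
  set y₀ := P * x * P with hy₀
  have hsand : ∀ z : A, P * (P * z * P) * P = P * z * P := by
    intro z
    rw [← mul_assoc, ← mul_assoc, hP, mul_assoc (P*z), hP]
  have hstar_y₀ : star y₀ = P * star x * P := by
    simp only [hy₀, star_mul, star_star, hsa.star_eq, mul_assoc]
  -- the self-adjoint real and imaginary parts of y₀
  set u := y₀ + star y₀ with hu
  set v := Complex.I • (star y₀ - y₀) with hv
  have husa : IsSelfAdjoint u := by
    rw [IsSelfAdjoint, hu, star_add, star_star, add_comm]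
  have hvsa : IsSelfAdjoint v := by
    rw [IsSelfAdjoint, hv, star_smul, star_sub, star_star, Complex.star_def, Complex.conj_I,
      neg_smul, smul_sub, smul_sub, neg_sub]
  have hy₀sand : P * y₀ * P = y₀ := hsand x
  have hy₀'sand : P * star y₀ * P = star y₀ := by
    rw [hstar_y₀]; exact hsand (star x)
  have husand : P * u * P = u := by
    rw [hu, mul_add, add_mul, hy₀sand, hy₀'sand]
  have hvsand : P * v * P = v := by
    rw [hv, mul_smul_comm, smul_mul_assoc, mul_sub, sub_mul, hy₀sand, hy₀'sand]
  have hkey : (∀ c : ℂ, u ≠ c • P) ∨ (∀ c : ℂ, v ≠ c • P) := by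
    by_contra hcon
    push_neg at hcon
    obtain ⟨⟨cu, hcu⟩, ⟨cv, hcv⟩⟩ := hcon
    refine absurd ?_ (hx ((2⁻¹ : ℂ) * cu + (2⁻¹ : ℂ) * Complex.I * cv))
    have hIv : Complex.I • v = y₀ - star y₀ := by
      rw [hv, smul_smul, Complex.I_mul_I, neg_one_smul, neg_sub]
    have hdec : y₀ = (2⁻¹ : ℂ) • u + (2⁻¹ : ℂ) • (Complex.I • v) := by
      rw [hIv, hu]
      module
    show y₀ = _
    rw [hdec, hcu, hcv, smul_smul, smul_smul, smul_smul, ← add_smul]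
  have hmain : ∃ y : A, IsSelfAdjoint y ∧ P * y * P = y ∧ ∀ c : ℂ, y ≠ c • P := by
    rcases hkey with hk | hk
    · exact ⟨u, husa, husand, hk⟩
    · exact ⟨v, hvsa, hvsand, hk⟩
  obtain ⟨y, hysa, hyPP, hyne⟩ := hmain
  have hPy : P * y = y := by
    nth_rewrite 1 [← hyPP]
    rw [← mul_assoc, ← mul_assoc, hP]
    exact hyPP
  have hyP : y * P = y := by
    nth_rewrite 1 [← hyPP]
    rw [mul_assoc (P * y), hP]
    exact hyPP
  obtain ⟨S, p, hproj, horth, hrep, hcorner⟩ := qtSpectral y hysa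
  -- find a nontrivial spectral projection under P
  have hfind : ∃ l ∈ S, l ≠ 0 ∧ p l ≠ 0 ∧ p l ≠ P := by
    by_contra hcon
    push_neg at hcon
    set T := S.filter (fun l => l ≠ 0 ∧ p l ≠ 0) with hT
    have hPT : ∀ l ∈ T, p l = P := by
      intro l hl
      obtain ⟨hlS, hl0, hlp0⟩ := Finset.mem_filter.mp hl
      exact hcon l hlS hl0 hlp0
    have hyT : y = ∑ l ∈ T, (l : ℝ) • p l := by
      rw [hrep]
      refine (Finset.sum_subset (Finset.filter_subset _ _) ?_).symm
      intro l hlS hlT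
      rcases Classical.em (l = 0) with h0 | h0
      · rw [h0, zero_smul]
      · have : p l = 0 := by
          by_contra hpl
          exact hlT (Finset.mem_filter.mpr ⟨hlS, h0, hpl⟩)
        rw [this, smul_zero]
    rcases Finset.eq_empty_or_nonempty T with hTe | ⟨l₀, hl₀⟩
    · exact hyne 0 (by rw [hyT, hTe, Finset.sum_empty, zero_smul])
    · have hTsingle : T = {l₀} := by
        apply Finset.eq_singleton_iff_unique_mem.mpr
        refine ⟨hl₀, ?_⟩
        intro m hm
        by_contra hml
        have h1 := horth m l₀ hml
        rw [hPT m hm, hPT l₀ hl₀, hP] at h1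
        exact hP0 h1
      rw [hTsingle, Finset.sum_singleton, hPT l₀ hl₀] at hyT
      exact hyne ((l₀ : ℝ) : ℂ) (by rw [hyT]; exact (algebraMap_smul ℂ (l₀:ℝ) P).symm)
  obtain ⟨l, hlS, hl0, hq0, hqP⟩ := hfind
  set q := p l with hqdef
  obtain ⟨hqsa, hqq⟩ := hproj l hlS
  obtain ⟨hPq, hqP'⟩ := hcorner l hlS hl0 P hPy hyP
  -- the complementary projection
  set q' := P - q with hq'
  have hq'sa : IsSelfAdjoint q' := hsa.sub hqsa
  have hq'q' : q' * q' = q' := by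
    rw [hq', mul_sub, sub_mul, sub_mul, hP, hqP', hPq, hqq]
    abel
  have hq'0 : q' ≠ 0 := by
    intro hc
    rw [hq'] at hc
    exact hqP (sub_eq_zero.mp hc).symm
  have hq'P : q' * P = q' := by rw [hq', sub_mul, hP, hqP']
  have hPq' : P * q' = q' := by rw [hq', mul_sub, hP, hPq]
  have hqq' : q * q' = 0 := by rw [hq', mul_sub, hqP', hqq, sub_self]
  have hq'q : q' * q = 0 := by rw [hq', sub_mul, hPq, hqq, sub_self]
  -- induction
  have hlt1 : Module.finrank ℂ (qtCorner q) < N :=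
    hN ▸ Submodule.finrank_lt_finrank_of_lt (qtCorner_lt hP hqq hqP' hPq hqP)
  have hlt2 : Module.finrank ℂ (qtCorner q') < N := by
    refine hN ▸ Submodule.finrank_lt_finrank_of_lt (qtCorner_lt hP hq'q' hq'P hPq' ?_)
    intro hc
    apply hq0
    have : q = P - q' := by rw [hq']; abel
    rw [this, hc, sub_self]
  obtain ⟨n₁, r₁, hmin₁, horth₁, hsub₁, hsum₁⟩ := ih _ hlt1 q hqsa hqq rfl
  obtain ⟨n₂, r₂, hmin₂, horth₂, hsub₂, hsum₂⟩ := ih _ hlt2 q' hq'sa hq'q' rfl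
  refine ⟨n₁ + n₂, Fin.append r₁ r₂, ?_, ?_, ?_, ?_⟩
  · intro i
    induction i using Fin.addCases with
    | left i => rw [Fin.append_left]; exact hmin₁ i
    | right i => rw [Fin.append_right]; exact hmin₂ i
  · intro i j hij
    induction i using Fin.addCases with
    | left i =>
      induction j using Fin.addCases with
      | left j =>
        rw [Fin.append_left, Fin.append_left]
        exact horth₁ i j (fun hc => hij (by rw [hc]))
      | right j =>
        rw [Fin.append_left, Fin.append_right]
        have h1 : r₁ i * q = r₁ i := (hsub₁ i).1
        have h2 : q' * r₂ j = r₂ j := (hsub₂ j).2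
        rw [← h1, ← h2, mul_assoc, ← mul_assoc q q', hqq', zero_mul, mul_zero]
    | right i =>
      induction j using Fin.addCases with
      | left j =>
        rw [Fin.append_right, Fin.append_left]
        have h1 : r₂ i * q' = r₂ i := (hsub₂ i).1
        have h2 : q * r₁ j = r₁ j := (hsub₁ j).2
        rw [← h1, ← h2, mul_assoc, ← mul_assoc q' q, hq'q, zero_mul, mul_zero]
      | right j =>
        rw [Fin.append_right, Fin.append_right]
        refine horth₂ i j (fun hc => hij (by rw [hc]))
  · intro i
    induction i using Fin.addCases with
    | left i =>
      rw [Fin.append_left]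
      constructor
      · rw [← (hsub₁ i).1, mul_assoc, hqP', (hsub₁ i).1]
      · rw [← (hsub₁ i).2, ← mul_assoc, hPq, (hsub₁ i).2]
    | right i =>
      rw [Fin.append_right]
      constructor
      · rw [← (hsub₂ i).1, mul_assoc, hq'P, (hsub₂ i).1]
      · rw [← (hsub₂ i).2, ← mul_assoc, hPq', (hsub₂ i).2]
  · rw [Fin.sum_univ_add]
    simp only [Fin.append_left, Fin.append_right]
    rw [← hsum₁, ← hsum₂, hq']
    abel

section QTmain
variable {A : Type*} [CStarAlgebra A] [FiniteDimensional ℂ A] {τ : A → ℂ}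

noncomputable def qtCoeff {q : A} (hq : QTMin q) (x : A) : ℂ := (hq.2.2.2 x).choose

lemma qtCoeff_spec {q : A} (hq : QTMin q) (x : A) :
    q * x * q = qtCoeff hq x • q := (hq.2.2.2 x).choose_spec

lemma qtCoeff_unique {q : A} (hq : QTMin q) {x : A} {c : ℂ}
    (h : q * x * q = c • q) : qtCoeff hq x = c := by
  have h1 := qtCoeff_spec hq x
  rw [h] at h1
  have h2 : (c - qtCoeff hq x) • q = 0 := by rw [sub_smul, h1, sub_self]
  rcases smul_eq_zero.mp h2 with hc | hq0
  · exact (sub_eq_zero.mp hc).symm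
  · exact absurd hq0 hq.2.2.1

lemma qtCoeff_add {q : A} (hq : QTMin q) (x y : A) :
    qtCoeff hq (x + y) = qtCoeff hq x + qtCoeff hq y :=
  qtCoeff_unique hq (by rw [mul_add, add_mul, qtCoeff_spec hq x, qtCoeff_spec hq y, add_smul])

lemma qtCoeff_smul {q : A} (hq : QTMin q) (c : ℂ) (x : A) :
    qtCoeff hq (c • x) = c * qtCoeff hq x :=
  qtCoeff_unique hq (by
    rw [mul_smul_comm, smul_mul_assoc, qtCoeff_spec hq x, smul_smul])

lemma qtCoeff_one {q : A} (hq : QTMin q) : qtCoeff hq 1 = 1 :=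
  qtCoeff_unique hq (by rw [mul_one, hq.2.1, one_smul])

lemma qtCompare (hτ : IsQuasitraceAux τ) {q r : A} (hq : QTMin q) (hr : QTMin r) :
    qtCoeff hq r = qtCoeff hr q ∧ qtCoeff hq r * τ q = qtCoeff hq r * τ r := by
  have spec1 := qtCoeff_spec hq r
  have spec2 := qtCoeff_spec hr q
  set c := qtCoeff hq r with hc
  set c' := qtCoeff hr q with hc'
  have hqsa := hq.1
  have hrsa := hr.1
  have hstar : star (q * r) = r * q := by rw [star_mul, hqsa.star_eq, hrsa.star_eq]
  have hqidem : ∀ z, q * (q * z) = q * z := fun z => by rw [← mul_assoc, hq.2.1]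
  have hridem : ∀ z, r * (r * z) = r * z := fun z => by rw [← mul_assoc, hr.2.1]
  have hA : (r * q) * (q * r) = r * q * r := by simp only [mul_assoc, hqidem]
  have hB : (q * r) * (r * q) = q * r * q := by simp only [mul_assoc, hridem]
  have hcc : c = c' := by
    have t1 : q * (r * q * r) = c' • (q * r) := by rw [spec2, mul_smul_comm]
    have t2 : q * (r * q * r) = c • (q * r) := by
      have : q * (r * q * r) = (q * r * q) * r := by simp only [mul_assoc]
      rw [this, spec1, smul_mul_assoc]
    have e1 : c' • (q * r) = c • (q * r) := by rw [← t1, t2]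
    by_cases hqr : q * r = 0
    · have hc0 : c = 0 := by
        have : (0:A) = c • q := by rw [← spec1, hqr, zero_mul]
        rcases smul_eq_zero.mp this.symm with h | h
        · exact h
        · exact absurd h hq.2.2.1
      have hrq : r * q = 0 := by rw [← hstar, hqr, star_zero]
      have hc'0 : c' = 0 := by
        have : (0:A) = c' • r := by rw [← spec2, hrq, zero_mul]
        rcases smul_eq_zero.mp this.symm with h | h
        · exact h
        · exact absurd h hr.2.2.1
      rw [hc0, hc'0]
    · have : (c' - c) • (q * r) = 0 := by rw [sub_smul, e1, sub_self]
      rcases smul_eq_zero.mp this with h | h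
      · exact (sub_eq_zero.mp h).symm
      · exact absurd h hqr
  constructor
  · exact hcc
  · have htr := hτ.2.1 (q * r)
    rw [hstar, hA, hB, spec1, spec2] at htr
    rw [hτ.2.2.2.2 c' r hrsa, hτ.2.2.2.2 c q hqsa] at htr
    rw [hcc] at htr ⊢
    exact htr.symm
end QTmain

lemma qtCoeff_zero {A : Type*} [CStarAlgebra A] [FiniteDimensional ℂ A] {q : A} (hq : QTMin q) :
    qtCoeff hq 0 = 0 :=
  qtCoeff_unique hq (by rw [mul_zero, zero_mul, zero_smul])

lemma qtCoeff_finsum {A : Type*} [CStarAlgebra A] [FiniteDimensional ℂ A] {q : A} (hq : QTMin q)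
    {ι : Type*} (s : Finset ι) (g : ι → A) :
    qtCoeff hq (∑ i ∈ s, g i) = ∑ i ∈ s, qtCoeff hq (g i) := by
  classical
  induction s using Finset.cons_induction with
  | empty => simpa using qtCoeff_zero hq
  | cons a s ha ih => rw [Finset.sum_cons, Finset.sum_cons, qtCoeff_add, ih]

theorem qtMain {A : Type*} [CStarAlgebra A] [FiniteDimensional ℂ A] (τ : A → ℂ)
    (hτ : IsQuasitraceAux τ) :
    ∃ τ' : A →ₗ[ℂ] ℂ, (∀ x : A, 0 ≤ τ' (star x * x)) ∧
      (∀ x y : A, τ' (x * y) = τ' (y * x)) ∧ ∀ a : A, τ a = τ' a := by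
  classical
  obtain ⟨n, e, hmin, horth, _, hsum⟩ := qtMinDecomp (1 : A) (IsSelfAdjoint.one A) (one_mul 1)
  set φ : A →ₗ[ℂ] ℂ :=
    { toFun := fun x => ∑ i, τ (e i) * qtCoeff (hmin i) x
      map_add' := by
        intro x y
        simp only [qtCoeff_add, mul_add, Finset.sum_add_distrib]
      map_smul' := by
        intro c x
        simp only [qtCoeff_smul, RingHom.id_apply, smul_eq_mul, Finset.mul_sum]
        exact Finset.sum_congr rfl fun i _ => by ring } with hφ
  have φ_apply : ∀ x, φ x = ∑ i, τ (e i) * qtCoeff (hmin i) x := fun _ => rfl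
  -- agreement on minimal projections
  have h_min_agree : ∀ r, (hr : QTMin r) → φ r = τ r := by
    intro r hr
    rw [φ_apply]
    have key : ∀ i, τ (e i) * qtCoeff (hmin i) r = τ r * qtCoeff (hmin i) r := by
      intro i
      have h2 := (qtCompare hτ (hmin i) hr).2
      rw [mul_comm, h2, mul_comm]
    rw [Finset.sum_congr rfl fun i _ => key i, ← Finset.mul_sum]
    have sum1 : ∑ i, qtCoeff (hmin i) r = 1 := by
      have swap : ∀ i, qtCoeff (hmin i) r = qtCoeff hr (e i) :=
        fun i => (qtCompare hτ (hmin i) hr).1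
      rw [Finset.sum_congr rfl fun i _ => swap i, ← qtCoeff_finsum hr, ← hsum, qtCoeff_one]
    rw [sum1, mul_one]
  -- agreement on projections
  have h_proj_agree : ∀ P : A, IsSelfAdjoint P → P * P = P → φ P = τ P := by
    intro P hsa hP
    obtain ⟨m, r, hminr, horthr, _, hsumr⟩ := qtMinDecomp P hsa hP
    have hcomm : ∀ i ∈ Finset.univ (α := Fin m), ∀ j ∈ Finset.univ, Commute (r i) (r j) := by
      intro i _ j _
      rcases eq_or_ne i j with rfl | hij
      · exact Commute.refl _
      · show r i * r j = r j * r i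
        rw [horthr i j hij, horthr j i hij.symm]
    rw [hsumr, map_sum, qtSum hτ Finset.univ r (fun i _ => (hminr i).1) hcomm]
    exact Finset.sum_congr rfl fun i _ => h_min_agree _ (hminr i)
  -- agreement on self-adjoint elements
  have h_sa_agree : ∀ h : A, IsSelfAdjoint h → φ h = τ h := by
    intro h hsa
    obtain ⟨S, p, hproj, horthp, hrep, _⟩ := qtSpectral h hsa
    have hsmul : ∀ l : ℝ, (l : ℝ) • p l = ((l : ℝ) : ℂ) • p l := by
      intro l
      rw [← algebraMap_smul (R := ℝ) ℂ (l : ℝ) (p l)]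
      norm_num
    have hstarl : ∀ l : ℝ, star ((l : ℝ) : ℂ) = ((l : ℝ) : ℂ) := by
      intro l; simp [Complex.star_def]
    have hsal : ∀ l ∈ S, IsSelfAdjoint ((l : ℝ) • p l) := by
      intro l hl
      rw [hsmul l]
      exact IsSelfAdjoint.smul (hstarl l) (hproj l hl).1
    have hcomml : ∀ l ∈ S, ∀ m ∈ S, Commute ((l : ℝ) • p l) ((m : ℝ) • p m) := by
      intro l _ m _
      rcases eq_or_ne l m with rfl | hlm
      · exact Commute.refl _
      · have hbase : p l * p m = p m * p l := by rw [horthp l m hlm, horthp m l hlm.symm]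
        exact Commute.smul_left (Commute.smul_right hbase _) _
    have hτh : τ h = ∑ l ∈ S, ((l : ℝ) : ℂ) * τ (p l) := by
      rw [hrep, qtSum hτ S (fun l => (l : ℝ) • p l) hsal hcomml]
      exact Finset.sum_congr rfl fun l hl => by
        rw [hsmul l, hτ.2.2.2.2 _ _ (hproj l hl).1]
    have hφh : φ h = ∑ l ∈ S, ((l : ℝ) : ℂ) * φ (p l) := by
      rw [hrep, map_sum]
      exact Finset.sum_congr rfl fun l hl => by rw [hsmul l, map_smul, smul_eq_mul]
    rw [hφh, hτh]
    exact Finset.sum_congr rfl fun l hl => by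
      rw [h_proj_agree (p l) (hproj l hl).1 (hproj l hl).2]
  -- decomposition into real and imaginary parts
  have hhalf : star ((2⁻¹ : ℂ)) = (2⁻¹ : ℂ) := by
    simp [Complex.star_def, Complex.ext_iff]
  have hdecomp : ∀ a : A, ∃ x y : A, IsSelfAdjoint x ∧ IsSelfAdjoint y ∧
      a = x + Complex.I • y := by
    intro a
    refine ⟨(2⁻¹ : ℂ) • (a + star a), (2⁻¹ : ℂ) • (Complex.I • (star a - a)), ?_, ?_, ?_⟩
    · have h1 : IsSelfAdjoint (a + star a) := by
        rw [IsSelfAdjoint, star_add, star_star, add_comm]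
      exact IsSelfAdjoint.smul hhalf h1
    · have h1 : IsSelfAdjoint (Complex.I • (star a - a)) := by
        rw [IsSelfAdjoint, star_smul, star_sub, star_star, Complex.star_def, Complex.conj_I,
          neg_smul, smul_sub, smul_sub, neg_sub]
      exact IsSelfAdjoint.smul hhalf h1
    · have h2 : Complex.I • ((2⁻¹ : ℂ) • (Complex.I • (star a - a)))
          = (2⁻¹ : ℂ) • (a - star a) := by
        rw [smul_comm Complex.I ((2⁻¹ : ℂ)), smul_smul Complex.I Complex.I,
          Complex.I_mul_I, neg_one_smul, neg_sub]
      rw [h2, smul_add, smul_sub]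
      module
  have h_agree : ∀ a : A, τ a = φ a := by
    intro a
    obtain ⟨x, y, hx, hy, hxy⟩ := hdecomp a
    rw [hxy, hτ.2.2.1 x y hx hy, map_add, map_smul, smul_eq_mul,
      h_sa_agree x hx, h_sa_agree y hy]
  refine ⟨φ, ?_, ?_, h_agree⟩
  · intro x
    rw [← h_agree]
    exact hτ.1 x
  · -- trace property by polarization
    have base : ∀ z : A, φ (star z * z) = φ (z * star z) := by
      intro z
      rw [← h_agree, ← h_agree]
      exact hτ.2.1 z
    intro a b
    have e1 := base (a + star b)
    have e2 := base (a + Complex.I • star b)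
    have ba := base a
    have bb := base (star b)
    simp only [star_add, star_smul, star_star, Complex.star_def, Complex.conj_I, add_mul,
      mul_add, map_add, neg_smul, smul_mul_assoc, mul_smul_comm, map_smul, smul_eq_mul,
      smul_smul, ← mul_assoc, Complex.I_mul_I, neg_mul, mul_neg, map_neg, neg_neg, one_mul,
      neg_one_mul] at e1 e2 ba bb
    have hI : Complex.I * Complex.I = -1 := Complex.I_mul_I
    linear_combination (-(e1 + Complex.I * e2)) / 2 + ((1 + Complex.I) / 2) * ba +
      ((1 + Complex.I) / 2) * bb +
      ((φ (star a * star b) - φ (star b * star a) - φ (b * a) + φ (a * b)) / 2) * hI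

/-- **Quasitraces on finite-dimensional C*-algebras are traces.** -/
theorem quasitrace_isTrace_of_finiteDimensional {A : Type*} [CStarAlgebra A]
    [FiniteDimensional ℂ A] (τ : A → ℂ) (hτ : IsQuasitrace τ) :
    ∃ τ' : A →ₗ[ℂ] ℂ, IsTrace τ' ∧ ∀ a : A, τ a = τ' a := by
  obtain ⟨τ', hpos, htrace, hagree⟩ := qtMain τ hτ.1
  exact ⟨τ', ⟨hpos, htrace⟩, hagree⟩
end

section
/- Let a, b be positive elements of a C*-algebra with a Cuntz subequivalent to b. Then for every ε > 0 there exist δ > 0 and an element x such that (a−ε)₊ = x* (b−δ)₊ x. -/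
open Filter

section AuxiliaryLemmas

set_option maxHeartbeats 2000000
set_option synthInstance.maxHeartbeats 200000


lemma aux_real_ineq {t c c' : ℝ} (ht : 0 ≤ t) (hc' : 0 < c') (hcc : c' ≤ c) :
    t ^ 2 * ((Real.sqrt (t + c'))⁻¹ - (Real.sqrt (t + c))⁻¹) ^ 2 ≤ c := by
  have hc : 0 < c := hc'.trans_le hcc
  obtain ⟨u, hu_def⟩ : ∃ u, u = Real.sqrt (t + c') := ⟨_, rfl⟩
  obtain ⟨w, hw_def⟩ : ∃ w, w = Real.sqrt (t + c) := ⟨_, rfl⟩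
  rw [← hu_def, ← hw_def]
  have hu : 0 < u := hu_def ▸ Real.sqrt_pos.mpr (by linarith)
  have hw : 0 < w := hw_def ▸ Real.sqrt_pos.mpr (by linarith)
  have huw : u ≤ w := by rw [hu_def, hw_def]; exact Real.sqrt_le_sqrt (by linarith)
  have hu2 : u ^ 2 = t + c' := hu_def ▸ Real.sq_sqrt (by linarith)
  have hw2 : w ^ 2 = t + c := hw_def ▸ Real.sq_sqrt (by linarith)
  have htuw : t ≤ u * w := by nlinarith
  have hΔ0 : 0 ≤ u⁻¹ - w⁻¹ := by
    have : w⁻¹ ≤ u⁻¹ := by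
      apply inv_anti₀ hu huw
    linarith
  have hΔuw : (u⁻¹ - w⁻¹) * (u * w) = w - u := by field_simp
  have h1 : t * (u⁻¹ - w⁻¹) ≤ w - u := by
    calc t * (u⁻¹ - w⁻¹) ≤ (u * w) * (u⁻¹ - w⁻¹) := by nlinarith
      _ = w - u := by rw [mul_comm]; exact hΔuw
  have h2 : (w - u) ^ 2 ≤ c := by nlinarith
  have h3 : 0 ≤ t * (u⁻¹ - w⁻¹) := mul_nonneg ht hΔ0
  calc t ^ 2 * (u⁻¹ - w⁻¹) ^ 2 = (t * (u⁻¹ - w⁻¹)) ^ 2 := by ring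
    _ ≤ (w - u) ^ 2 := by nlinarith
    _ ≤ c := h2

section Aux
set_option linter.unusedSectionVars false

variable {W : Type*} [CStarAlgebra W] [PartialOrder W] [StarOrderedRing W]

/-- If `Q*Q ≤ z*z` then `‖Q * cfc F (z*z) * Q‖` is controlled by `sup t*F t`. -/
lemma aux_sandwich_norm (zz Q : W) (hzz : 0 ≤ zz) (hQ : 0 ≤ Q) (hle : Q * Q ≤ zz)
    (F : ℝ → ℝ) (hF : Continuous F) (hF0 : ∀ t, 0 ≤ F t) {c : ℝ} (hc : 0 ≤ c)
    (hb : ∀ t ∈ spectrum ℝ zz, t * F t ≤ c) :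
    ‖Q * cfc F zz * Q‖ ≤ c := by
  have hσ : ∀ t ∈ spectrum ℝ zz, 0 ≤ t := spectrum_nonneg_of_nonneg hzz
  have hQsa : IsSelfAdjoint Q := hQ.isSelfAdjoint
  have hsa : IsSelfAdjoint zz := hzz.isSelfAdjoint
  set sF : ℝ → ℝ := fun t => Real.sqrt (F t) with hsF_def
  have hsFc : Continuous sF := hF.sqrt
  set E := cfc sF zz with hE_def
  have hE0 : (0:W) ≤ E := cfc_nonneg fun t _ => Real.sqrt_nonneg _
  have hEsa : IsSelfAdjoint E := hE0.isSelfAdjoint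
  have hEE : E * E = cfc F zz := by
    rw [hE_def, ← cfc_mul sF sF zz hsFc.continuousOn hsFc.continuousOn]
    exact cfc_congr fun t _ => Real.mul_self_sqrt (hF0 t)
  have h1 : Q * cfc F zz * Q = star (E * Q) * (E * Q) := by
    rw [← hEE, star_mul, hEsa.star_eq, hQsa.star_eq]
    simp only [mul_assoc]
  have h2 : ‖Q * cfc F zz * Q‖ = ‖E * Q‖ * ‖E * Q‖ := by
    rw [h1, CStarRing.norm_star_mul_self]
  have h3 : ‖E * Q‖ * ‖E * Q‖ = ‖E * (Q * Q) * E‖ := by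
    rw [← CStarRing.norm_self_mul_star (x := E * Q), star_mul, hEsa.star_eq, hQsa.star_eq]
    simp only [mul_assoc]
  have h4 : E * (Q * Q) * E ≤ E * zz * E := by
    have := star_left_conjugate_le_conjugate hle E
    rwa [hEsa.star_eq] at this
  have h5 : (0:W) ≤ E * (Q * Q) * E := by
    have : (0:W) ≤ Q * Q := by
      simpa [hQsa.star_eq] using star_mul_self_nonneg Q
    have := star_left_conjugate_nonneg this E
    rwa [hEsa.star_eq] at this
  have h6 : ‖E * (Q * Q) * E‖ ≤ ‖E * zz * E‖ :=
    CStarAlgebra.norm_le_norm_of_nonneg_of_le h5 h4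
  have h7 : E * zz * E = cfc (fun t => sF t * t * sF t) zz := by
    rw [hE_def]
    nth_rewrite 2 [(cfc_id ℝ zz hsa).symm]
    rw [← cfc_mul sF id zz hsFc.continuousOn continuousOn_id,
      ← cfc_mul (fun x => sF x * id x) sF zz (hsFc.mul continuous_id).continuousOn hsFc.continuousOn]
    exact cfc_congr fun t _ => rfl
  have h8 : ‖E * zz * E‖ ≤ c := by
    rw [h7]
    refine norm_cfc_le hc fun t ht => ?_
    have ht0 := hσ t ht
    have : sF t * t * sF t = t * F t := by
      rw [hsF_def]; ring_nf
      rw [Real.sq_sqrt (hF0 t)]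
      ring
    rw [this, Real.norm_of_nonneg (mul_nonneg ht0 (hF0 t))]
    exact hb t ht
  calc ‖Q * cfc F zz * Q‖ = ‖E * Q‖ * ‖E * Q‖ := h2
    _ = ‖E * (Q * Q) * E‖ := h3
    _ ≤ ‖E * zz * E‖ := h6
    _ ≤ c := h8



lemma aux_cfc_mul_mul (zz : W) (hsa : IsSelfAdjoint zz) (f h : ℝ → ℝ)
    (hf : Continuous f) (hh : Continuous h) :
    cfc f zz * zz * cfc h zz = cfc (fun t => f t * t * h t) zz := by
  nth_rewrite 2 [(cfc_id ℝ zz hsa).symm]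
  rw [← cfc_mul f id zz hf.continuousOn continuousOn_id,
    ← cfc_mul (fun x => f x * id x) h zz (hf.mul continuous_id).continuousOn hh.continuousOn]
  exact cfc_congr fun t _ => rfl

lemma aux_exists_v (z Q : W) (hQ : 0 ≤ Q) (hle : Q * Q ≤ star z * z) :
    ∃ v : W, star v * v = Q * Q ∧ v ∈ closure (Set.range fun y : W => z * y) := by
  set zz := star z * z with hzz_def
  have hzz : (0:W) ≤ zz := star_mul_self_nonneg z
  have hσ : ∀ t ∈ spectrum ℝ zz, 0 ≤ t := spectrum_nonneg_of_nonneg hzz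
  have hsa : IsSelfAdjoint zz := hzz.isSelfAdjoint
  have hQsa : IsSelfAdjoint Q := hQ.isSelfAdjoint
  have hQQ : (0:W) ≤ Q * Q := by simpa [hQsa.star_eq] using star_mul_self_nonneg Q
  -- the approximating functions
  set g : ℕ → ℝ → ℝ := fun m t => (Real.sqrt (max t 0 + (1:ℝ)/(m+1)))⁻¹ with hg_def
  have hcm : ∀ m : ℕ, (0:ℝ) < 1/(m+1) := fun m => by positivity
  have hgpos : ∀ (m : ℕ) (t : ℝ), 0 < Real.sqrt (max t 0 + 1/(m+1)) := fun m t =>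
    Real.sqrt_pos.mpr (by have := hcm m; have := le_max_right t 0; positivity)
  have hgc : ∀ m : ℕ, Continuous (g m) := by
    intro m
    apply Continuous.inv₀
    · exact ((continuous_id.max continuous_const).add continuous_const).sqrt
    · exact fun t => (hgpos m t).ne'
  have hg0 : ∀ m t, 0 ≤ g m t := fun m t => by positivity
  -- the sequence
  set seq : ℕ → W := fun m => z * cfc (g m) zz * Q with hseq_def
  -- star (seq m) * seq m = Q * cfc (fun t => g m t * t * g m t) zz * Q
  have hstar : ∀ m : ℕ, star (seq m) * seq m
      = Q * cfc (fun t => g m t * t * g m t) zz * Q := by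
    intro m
    have hD : IsSelfAdjoint (cfc (g m) zz) := cfc_predicate _ _
    calc star (seq m) * seq m
        = Q * (cfc (g m) zz * (star z * z) * cfc (g m) zz) * Q := by
          simp only [hseq_def, star_mul, hQsa.star_eq, hD.star_eq, mul_assoc]
      _ = Q * cfc (fun t => g m t * t * g m t) zz * Q := by
          rw [← hzz_def, aux_cfc_mul_mul zz hsa _ _ (hgc m) (hgc m)]
  -- key function computation:  g m t * t * g m t = t / (max t 0 + 1/(m+1))
  have hgmul : ∀ (m : ℕ) (t : ℝ), g m t * t * g m t = t / (max t 0 + 1/(m+1)) := by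
    intro m t
    have h := Real.mul_self_sqrt (by have := hcm m; have := le_max_right t 0; positivity :
      (0:ℝ) ≤ max t 0 + 1/(m+1))
    have hgg : g m t * g m t = (max t 0 + 1/(m+1))⁻¹ := by
      rw [hg_def]; dsimp only; rw [← mul_inv, h]
    calc g m t * t * g m t = t * (g m t * g m t) := by ring
      _ = t * (max t 0 + 1/(m+1))⁻¹ := by rw [hgg]
      _ = t / (max t 0 + 1/(m+1)) := (div_eq_mul_inv _ _).symm
  -- general star-product computation
  have hstar2 : ∀ f : ℝ → ℝ, Continuous f →
      star (z * cfc f zz * Q) * (z * cfc f zz * Q)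
        = Q * cfc (fun t => f t * t * f t) zz * Q := by
    intro f hf
    have hD : IsSelfAdjoint (cfc f zz) := cfc_predicate _ _
    calc star (z * cfc f zz * Q) * (z * cfc f zz * Q)
        = Q * (cfc f zz * (star z * z) * cfc f zz) * Q := by
          simp only [star_mul, hQsa.star_eq, hD.star_eq, mul_assoc]
      _ = Q * cfc (fun t => f t * t * f t) zz * Q := by
          rw [← hzz_def, aux_cfc_mul_mul zz hsa _ _ hf hf]
  -- claim 1 : ‖Q*Q - star (seq m) * seq m‖ ≤ 1/(m+1)
  have claim1 : ∀ m : ℕ, ‖Q * Q - star (seq m) * seq m‖ ≤ 1/(m+1) := by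
    intro m
    have hgtg : Continuous (fun t => g m t * t * g m t) :=
      (((hgc m).mul continuous_id).mul (hgc m))
    have hkey : Q * Q - star (seq m) * seq m
        = Q * cfc (fun t => 1 - g m t * t * g m t) zz * Q := by
      rw [hstar m]
      have h1 : cfc (fun t => 1 - g m t * t * g m t) zz
          = cfc (fun _ => (1:ℝ)) zz - cfc (fun t => g m t * t * g m t) zz :=
        cfc_sub _ _ zz continuousOn_const hgtg.continuousOn
      have h2 : cfc (fun _ => (1:ℝ)) zz = 1 := by
        rw [cfc_const 1 zz hsa, map_one]
      rw [h1, h2]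
      noncomm_ring
    rw [hkey]
    refine aux_sandwich_norm zz Q hzz hQ hle (fun t => 1 - g m t * t * g m t)
      (continuous_const.sub hgtg) (fun t => ?_) (le_of_lt (hcm m)) (fun t ht => ?_)
    · -- 0 ≤ 1 - g m t * t * g m t
      try dsimp only
      rw [hgmul m t]
      have hpos : (0:ℝ) < max t 0 + 1/(m+1) := by
        have := hcm m; have := le_max_right t 0; positivity
      have : t / (max t 0 + 1/(m+1)) ≤ 1 := by
        rw [div_le_one hpos]
        have := le_max_left t 0
        have := hcm m
        linarith
      linarith
    · -- t * (1 - ...) ≤ 1/(m+1)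
      have ht0 := hσ t ht
      try dsimp only
      rw [hgmul m t, max_eq_left ht0]
      have hpos : (0:ℝ) < t + 1/(m+1) := by have := hcm m; linarith
      have h1 : 1 - t / (t + 1/(m+1)) = (1/(m+1)) / (t + 1/(m+1)) := by
        field_simp; ring
      rw [h1]
      calc t * ((1/(m+1)) / (t + 1/(m+1))) ≤ (t + 1/(m+1)) * ((1/(m+1)) / (t + 1/(m+1))) := by
            have := hcm m
            have hnn : (0:ℝ) ≤ (1/(m+1)) / (t + 1/(m+1)) := by positivity
            nlinarith
        _ = 1/(m+1) := by field_simp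
  -- claim 2 : Cauchy estimate
  have claim2 : ∀ m k : ℕ, m ≤ k → ‖seq k - seq m‖^2 ≤ 1/(m+1) := by
    intro m k hmk
    have hΔc : Continuous (fun t => g k t - g m t) := (hgc k).sub (hgc m)
    have hdiff : seq k - seq m = z * cfc (fun t => g k t - g m t) zz * Q := by
      rw [cfc_sub _ _ zz (hgc k).continuousOn (hgc m).continuousOn]
      simp only [hseq_def]
      noncomm_ring
    have hnorm : ‖seq k - seq m‖^2 = ‖star (seq k - seq m) * (seq k - seq m)‖ := by
      rw [CStarRing.norm_star_mul_self, sq]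
    rw [hnorm, hdiff, hstar2 _ hΔc]
    have hcongr : cfc (fun t => (g k t - g m t) * t * (g k t - g m t)) zz
        = cfc (fun t => max t 0 * (g k t - g m t)^2) zz := by
      apply cfc_congr
      intro t ht
      have ht0 := hσ t ht
      dsimp only
      rw [max_eq_left ht0]
      ring
    rw [hcongr]
    refine aux_sandwich_norm zz Q hzz hQ hle (fun t => max t 0 * (g k t - g m t)^2)
      ((continuous_id.max continuous_const).mul (hΔc.pow 2)) (fun t => ?_)
      (le_of_lt (hcm m)) (fun t ht => ?_)
    · have := le_max_right t 0; positivity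
    · have ht0 := hσ t ht
      try dsimp only
      rw [max_eq_left ht0]
      have hgk : g k t = (Real.sqrt (t + 1/(k+1)))⁻¹ := by
        rw [hg_def]; dsimp only; rw [max_eq_left ht0]
      have hgm' : g m t = (Real.sqrt (t + 1/(m+1)))⁻¹ := by
        rw [hg_def]; dsimp only; rw [max_eq_left ht0]
      have hle' : (1:ℝ)/(k+1) ≤ 1/(m+1) := by
        apply one_div_le_one_div_of_le (by positivity)
        have : (m:ℝ) ≤ k := Nat.cast_le.mpr hmk
        linarith
      have heq : t * (t * ((Real.sqrt (t + 1/(k+1)))⁻¹ - (Real.sqrt (t + 1/(m+1)))⁻¹)^2)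
          = t^2 * ((Real.sqrt (t + 1/(k+1)))⁻¹ - (Real.sqrt (t + 1/(m+1)))⁻¹)^2 := by ring
      rw [hgk, hgm', heq]
      exact aux_real_ineq ht0 (hcm k) hle'
  -- Cauchy sequence
  have hcs : CauchySeq seq := by
    apply cauchySeq_of_le_tendsto_0 (b := fun N : ℕ => Real.sqrt (1/(N+1)))
    · intro n m N hn hm
      have main : ∀ p q : ℕ, N ≤ p → p ≤ q → ‖seq q - seq p‖ ≤ Real.sqrt (1/(N+1)) := by
        intro p q hp hpq
        have h1 : ‖seq q - seq p‖^2 ≤ 1/(p+1) := claim2 p q hpq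
        have h2 : (1:ℝ)/(p+1) ≤ 1/(N+1) := by
          apply one_div_le_one_div_of_le (by positivity)
          have : (N:ℝ) ≤ p := Nat.cast_le.mpr hp
          linarith
        have h3 : ‖seq q - seq p‖^2 ≤ 1/(N+1) := h1.trans h2
        calc ‖seq q - seq p‖ = Real.sqrt (‖seq q - seq p‖^2) :=
              (Real.sqrt_sq (norm_nonneg _)).symm
          _ ≤ Real.sqrt (1/(N+1)) := Real.sqrt_le_sqrt h3
      rw [dist_eq_norm]
      rcases le_total m n with h | h
      · exact main m n hm h
      · rw [norm_sub_rev]; exact main n m hn h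
    · have h0 : Tendsto (fun N : ℕ => (1:ℝ)/(N+1)) atTop (nhds 0) :=
        tendsto_one_div_add_atTop_nhds_zero_nat
      have := h0.sqrt
      simpa using this
  obtain ⟨v, hv⟩ := cauchySeq_tendsto_of_complete hcs
  refine ⟨v, ?_, ?_⟩
  · have l1 : Tendsto (fun m => star (seq m) * seq m) atTop (nhds (star v * v)) :=
      (hv.star).mul hv
    have l2 : Tendsto (fun m => star (seq m) * seq m - Q * Q) atTop (nhds 0) := by
      apply squeeze_zero_norm (a := fun m : ℕ => 1/(m+1))
        (fun m : ℕ => by rw [norm_sub_rev]; exact claim1 m)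
      exact tendsto_one_div_add_atTop_nhds_zero_nat
    exact tendsto_nhds_unique l1 (tendsto_sub_nhds_zero_iff.mp l2)
  · exact mem_closure_of_tendsto hv
      (Eventually.of_forall fun m => ⟨cfc (g m) zz * Q, (mul_assoc _ _ _).symm⟩)

end Aux

end AuxiliaryLemmas

set_option maxHeartbeats 2000000
set_option synthInstance.maxHeartbeats 200000

open Unitization

/-- The positive part `(a − ε)₊` of a positive element, via functional calculus. -/
noncomputable def cutDown {A : Type*} [NonUnitalCStarAlgebra A] [PartialOrder A]
    [StarOrderedRing A] (a : A) (ε : ℝ) : A :=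
  cfcₙ (fun t : ℝ => max (t - ε) 0) a

/-- **Rørdam's lemma:** if `a ≾ b` (Cuntz subequivalence: `rₙ* b rₙ → a` for some
sequence `rₙ`) for positive `a, b`, then for every `ε > 0` there are `δ > 0` and `x`
with `(a − ε)₊ = x* (b − δ)₊ x`. -/
theorem rordam_lemma {A : Type*} [NonUnitalCStarAlgebra A] [PartialOrder A]
    [StarOrderedRing A] (a b : A) (ha : 0 ≤ a) (hb : 0 ≤ b)
    (hsub : ∃ r : ℕ → A, Tendsto (fun n => star (r n) * b * r n) atTop (nhds a)) :
    ∀ ε : ℝ, 0 < ε → ∃ δ : ℝ, 0 < δ ∧ ∃ x : A,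
      cutDown a ε = star x * cutDown b δ * x := by
  intro ε hε
  -- pick a good conjugator
  obtain ⟨rs, hrs⟩ := hsub
  obtain ⟨n, hn⟩ := (Metric.tendsto_atTop.mp hrs (ε/2) (by positivity))
  set r : A := rs n with hr_def
  have hδlt : ‖star r * b * r - a‖ < ε/2 := by
    simpa [dist_eq_norm] using hn n le_rfl
  set δ : ℝ := ‖star r * b * r - a‖ with hδ_def
  have hδ0 : 0 ≤ δ := norm_nonneg _
  set ρ : ℝ := ‖r‖ with hρ_def
  have hρ0 : 0 ≤ ρ := norm_nonneg _
  set δ' : ℝ := (ε/2 - δ)/(2*(ρ^2+1)) with hδ'_def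
  have hδ'pos : 0 < δ' := by
    apply div_pos (by linarith) (by positivity)
  set κ : ℝ := δ + ρ^2*δ' with hκ_def
  have hκ0 : 0 ≤ κ := by positivity
  have hκε : κ < ε/2 := by
    have h1 : ρ^2*δ' ≤ (ρ^2+1)*δ' := by nlinarith
    have h2 : (ρ^2+1)*δ' = (ε/2-δ)/2 := by rw [hδ'_def]; field_simp
    have h3 : (ε/2-δ)/2 < ε/2 - δ := by linarith
    linarith
  -- lift to the unitization
  have ha' : (0 : Unitization ℂ A) ≤ (a : Unitization ℂ A) := inr_nonneg_iff.mpr ha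
  have hb' : (0 : Unitization ℂ A) ≤ (b : Unitization ℂ A) := inr_nonneg_iff.mpr hb
  have hasa : IsSelfAdjoint (a : Unitization ℂ A) := ha'.isSelfAdjoint
  have hbsa : IsSelfAdjoint (b : Unitization ℂ A) := hb'.isSelfAdjoint
  have hσa : ∀ t ∈ spectrum ℝ (a : Unitization ℂ A), 0 ≤ t := spectrum_nonneg_of_nonneg ha'
  have hσb : ∀ t ∈ spectrum ℝ (b : Unitization ℂ A), 0 ≤ t := spectrum_nonneg_of_nonneg hb'
  -- cut functions
  set cut : ℝ → ℝ → ℝ := fun c t => max (t - c) 0 with hcut_def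
  have hcutc : ∀ c, Continuous (cut c) :=
    fun c => (continuous_id.sub continuous_const).max continuous_const
  have hcut0 : ∀ c t, 0 ≤ cut c t := fun c t => le_max_right _ _
  have hscutc : ∀ c, Continuous (fun t => Real.sqrt (cut c t)) := fun c => (hcutc c).sqrt
  -- `B` and its square root `s`
  set B : Unitization ℂ A := cfc (cut δ') (b : Unitization ℂ A) with hB_def
  set s : Unitization ℂ A := cfc (fun t => Real.sqrt (cut δ' t)) (b : Unitization ℂ A)
    with hs_def
  have hssa : IsSelfAdjoint s := cfc_predicate _ _
  have hss : s * s = B := by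
    rw [hs_def, hB_def, ← cfc_mul _ _ (b : Unitization ℂ A)
      (hscutc δ').continuousOn (hscutc δ').continuousOn]
    exact cfc_congr fun t _ => Real.mul_self_sqrt (hcut0 δ' t)
  -- ‖b - B‖ ≤ δ'
  have hBb : ‖(b : Unitization ℂ A) - B‖ ≤ δ' := by
    have h1 : cfc (fun t : ℝ => t - cut δ' t) (b : Unitization ℂ A)
        = (b : Unitization ℂ A) - B := by
      rw [cfc_sub (fun t : ℝ => t) (cut δ') (b : Unitization ℂ A)
        continuous_id.continuousOn (hcutc δ').continuousOn,
        cfc_id' ℝ (b : Unitization ℂ A) hbsa, hB_def]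
    rw [← h1]
    refine norm_cfc_le hδ'pos.le fun t ht => ?_
    have ht0 := hσb t ht
    rw [hcut_def]
    dsimp only
    rcases le_total t δ' with h | h
    · rw [max_eq_right (by linarith)]
      rw [Real.norm_of_nonneg (by linarith)]
      linarith
    · rw [max_eq_left (by linarith)]
      rw [Real.norm_of_nonneg (by linarith)]
      linarith
  -- a - κ·1 ≤ r* B r
  have hclose : ‖(a : Unitization ℂ A) - star (r : Unitization ℂ A) * B * (r : Unitization ℂ A)‖
      ≤ κ := by
    have e1 : (a : Unitization ℂ A) - star (r : Unitization ℂ A) * B * (r : Unitization ℂ A)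
        = (a - star r * b * r : A)
          + star (r : Unitization ℂ A) * ((b : Unitization ℂ A) - B) * (r : Unitization ℂ A) := by
      rw [Unitization.inr_sub, Unitization.inr_mul, Unitization.inr_mul, Unitization.inr_star]
      noncomm_ring
    rw [e1]
    refine (norm_add_le _ _).trans ?_
    have e2 : ‖((a - star r * b * r : A) : Unitization ℂ A)‖ = δ := by
      rw [Unitization.norm_inr, hδ_def, ← norm_neg, neg_sub]
    have e3 : ‖star (r : Unitization ℂ A) * ((b : Unitization ℂ A) - B) * (r : Unitization ℂ A)‖
        ≤ ρ^2 * δ' := by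
      calc ‖star (r : Unitization ℂ A) * ((b : Unitization ℂ A) - B) * (r : Unitization ℂ A)‖
          ≤ ‖star (r : Unitization ℂ A) * ((b : Unitization ℂ A) - B)‖
            * ‖(r : Unitization ℂ A)‖ := norm_mul_le _ _
        _ ≤ ‖star (r : Unitization ℂ A)‖ * ‖(b : Unitization ℂ A) - B‖
            * ‖(r : Unitization ℂ A)‖ := by
            gcongr
            exact norm_mul_le _ _
        _ ≤ ρ * δ' * ρ := by
            rw [norm_star, Unitization.norm_inr]
            gcongr <;> simp [hρ_def, hρ0, hδ'pos.le, hBb]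
        _ = ρ^2 * δ' := by ring
    rw [hκ_def, e2]
    linarith [e3]
  -- the operator inequality  a - κ·1 ≤ r* B r
  have horder : (a : Unitization ℂ A) - algebraMap ℝ (Unitization ℂ A) κ
      ≤ star (r : Unitization ℂ A) * B * (r : Unitization ℂ A) := by
    set u : Unitization ℂ A :=
      star (r : Unitization ℂ A) * B * (r : Unitization ℂ A) - (a : Unitization ℂ A) with hu_def
    have hBsa : IsSelfAdjoint B := cfc_predicate _ _
    have husa : IsSelfAdjoint u := (hBsa.conjugate' (r : Unitization ℂ A)).sub hasa
    have h1 : -(algebraMap ℝ (Unitization ℂ A) ‖u‖) ≤ u := husa.neg_algebraMap_norm_le_self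
    have huκ : ‖u‖ ≤ κ := by
      rw [hu_def, norm_sub_rev]
      exact hclose
    have h2 : (0 : Unitization ℂ A) ≤ algebraMap ℝ (Unitization ℂ A) (κ - ‖u‖) := by
      rw [← cfc_const (κ - ‖u‖) (1 : Unitization ℂ A) (IsSelfAdjoint.one _)]
      exact cfc_nonneg fun t _ => by linarith
    have h3 : -(algebraMap ℝ (Unitization ℂ A) κ) ≤ u := by
      have h4 : algebraMap ℝ (Unitization ℂ A) ‖u‖ ≤ algebraMap ℝ (Unitization ℂ A) κ := by
        rw [← sub_nonneg, ← map_sub]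
        exact h2
      exact le_trans (neg_le_neg h4) h1
    have h5 := add_le_add_right h3 (a : Unitization ℂ A)
    calc (a : Unitization ℂ A) - algebraMap ℝ (Unitization ℂ A) κ
        = (a : Unitization ℂ A) + -(algebraMap ℝ (Unitization ℂ A) κ) := by rw [sub_eq_add_neg]
      _ ≤ (a : Unitization ℂ A) + u := h5
      _ = star (r : Unitization ℂ A) * B * (r : Unitization ℂ A) := by
          rw [hu_def]; noncomm_ring
  -- the function g and element G
  set den : ℝ → ℝ := fun t => max (t - κ) (ε/2 - κ) with hden_def
  have hdenc : Continuous den := (continuous_id.sub continuous_const).max continuous_const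
  have hdenpos : ∀ t, 0 < den t := fun t => lt_of_lt_of_le (by linarith) (le_max_right _ _)
  set g : ℝ → ℝ := fun t => Real.sqrt (cut (ε/2) t / den t) with hg_def
  have hgc : Continuous g :=
    ((hcutc (ε/2)).div hdenc fun t => (hdenpos t).ne').sqrt
  set G : Unitization ℂ A := cfc g (a : Unitization ℂ A) with hG_def
  have hG0 : (0 : Unitization ℂ A) ≤ G := cfc_nonneg fun t _ => Real.sqrt_nonneg _
  have hGsa : IsSelfAdjoint G := hG0.isSelfAdjoint
  -- key identity  G (a - κ) G = (a - ε/2)₊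
  have hkeyfun : ∀ t : ℝ, g t * (t - κ) * g t = cut (ε/2) t := by
    intro t
    have hgg : g t * g t = cut (ε/2) t / den t := by
      rw [hg_def]
      exact Real.mul_self_sqrt (div_nonneg (hcut0 _ t) (hdenpos t).le)
    have h6 : g t * (t - κ) * g t = (g t * g t) * (t - κ) := by ring
    rw [h6, hgg]
    rcases le_or_gt (ε/2) t with h | h
    · have hd : den t = t - κ := by
        rw [hden_def]
        exact max_eq_left (by linarith)
      rw [hd, div_mul_cancel₀]
      linarith [hκε]
    · have hn : cut (ε/2) t = 0 := by
        rw [hcut_def]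
        exact max_eq_right (by linarith)
      rw [hn, zero_div, zero_mul]
  have hGid : G * ((a : Unitization ℂ A) - algebraMap ℝ (Unitization ℂ A) κ) * G
      = cfc (cut (ε/2)) (a : Unitization ℂ A) := by
    have hsub' : (a : Unitization ℂ A) - algebraMap ℝ (Unitization ℂ A) κ
        = cfc (fun t : ℝ => t - κ) (a : Unitization ℂ A) := by
      rw [cfc_sub (fun t : ℝ => t) (fun _ => κ) (a : Unitization ℂ A)
        continuous_id.continuousOn continuousOn_const,
        cfc_id' ℝ (a : Unitization ℂ A) hasa, cfc_const κ (a : Unitization ℂ A) hasa]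
    rw [hsub', hG_def,
      ← cfc_mul g (fun t : ℝ => t - κ) (a : Unitization ℂ A) hgc.continuousOn
        (continuous_sub_right κ).continuousOn,
      ← cfc_mul (fun t : ℝ => g t * (t - κ)) g (a : Unitization ℂ A)
        (hgc.mul (continuous_sub_right κ)).continuousOn hgc.continuousOn]
    exact cfc_congr fun t _ => hkeyfun t
  -- the element z and the inequality (a-ε)₊ ≤ Q² ≤ z* z
  set z : Unitization ℂ A := s * ((r : Unitization ℂ A) * G) with hz_def
  have hzz_eq : star z * z
      = G * (star (r : Unitization ℂ A) * B * (r : Unitization ℂ A)) * G := by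
    rw [hz_def]
    simp only [star_mul, hssa.star_eq, hGsa.star_eq, mul_assoc, hss]
    rw [← hss]
    simp only [mul_assoc]
  have hP2 : cfc (cut (ε/2)) (a : Unitization ℂ A) ≤ star z * z := by
    rw [hzz_eq, ← hGid]
    have := star_left_conjugate_le_conjugate horder G
    rwa [hGsa.star_eq] at this
  have hPle : cfc (cut ε) (a : Unitization ℂ A) ≤ cfc (cut (ε/2)) (a : Unitization ℂ A) := by
    refine cfc_mono (fun t _ => ?_) (hcutc ε).continuousOn (hcutc (ε/2)).continuousOn
    simp only [hcut_def]
    exact max_le_max (by linarith) le_rfl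
  set Q : Unitization ℂ A := cfc (fun t => Real.sqrt (cut ε t)) (a : Unitization ℂ A) with hQ_def
  have hQ0 : (0 : Unitization ℂ A) ≤ Q := cfc_nonneg fun t _ => Real.sqrt_nonneg _
  have hQQ : Q * Q = cfc (cut ε) (a : Unitization ℂ A) := by
    rw [hQ_def, ← cfc_mul _ _ (a : Unitization ℂ A)
      (hscutc ε).continuousOn (hscutc ε).continuousOn]
    exact cfc_congr fun t _ => Real.mul_self_sqrt (hcut0 ε t)
  have hleQ : Q * Q ≤ star z * z := by
    rw [hQQ]
    exact hPle.trans hP2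
  obtain ⟨v, hvP, hvmem⟩ := aux_exists_v z Q hQ0 hleQ
  -- the plateau function η and N = η(b)
  set η : ℝ → ℝ := fun t => min ((2/δ') * cut (δ'/2) t) 1 with hη_def
  have hηc : Continuous η := (continuous_const.mul (hcutc (δ'/2))).min continuous_const
  set N : Unitization ℂ A := cfc η (b : Unitization ℂ A) with hN_def
  have hNs : N * s = s := by
    rw [hN_def, hs_def, ← cfc_mul η _ (b : Unitization ℂ A)
      hηc.continuousOn (hscutc δ').continuousOn]
    refine cfc_congr fun t _ => ?_
    rcases le_or_gt δ' t with h | h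
    · have h1 : η t = 1 := by
        rw [hη_def]
        dsimp only
        have hcv : cut (δ'/2) t = t - δ'/2 := by
          rw [hcut_def]; exact max_eq_left (by linarith)
        rw [hcv]
        refine min_eq_right ?_
        rw [div_mul_eq_mul_div, le_div_iff₀ hδ'pos]
        linarith
      rw [h1, one_mul]
    · have h2 : cut δ' t = 0 := by
        rw [hcut_def]; exact max_eq_right (by linarith)
      rw [h2, Real.sqrt_zero, mul_zero]
  have hNz : N * z = z := by
    rw [hz_def, ← mul_assoc, hNs]
  have hNv : N * v = v := by
    have hclosed : IsClosed {w : Unitization ℂ A | N * w = w} :=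
      isClosed_eq (continuous_const.mul continuous_id) continuous_id
    have hsubset : (Set.range fun y : Unitization ℂ A => z * y)
        ⊆ {w : Unitization ℂ A | N * w = w} := by
      rintro - ⟨y, rfl⟩
      show N * (z * y) = z * y
      rw [← mul_assoc, hNz]
    exact hclosed.closure_subset_iff.mpr hsubset hvmem
  -- factor N = c½ * Zb through (b - δ'/4)₊^(1/2)
  set den2 : ℝ → ℝ := fun t => Real.sqrt (max (t - δ'/4) (δ'/4)) with hden2_def
  have hden2pos : ∀ t, 0 < den2 t := fun t =>
    Real.sqrt_pos.mpr (lt_of_lt_of_le (by linarith) (le_max_right _ _))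
  have hden2c : Continuous den2 := ((continuous_id.sub continuous_const).max
    continuous_const).sqrt
  set ζ : ℝ → ℝ := fun t => η t / den2 t with hζ_def
  have hζc : Continuous ζ := hηc.div hden2c fun t => (hden2pos t).ne'
  set Zb : Unitization ℂ A := cfc ζ (b : Unitization ℂ A) with hZb_def
  set chalf : Unitization ℂ A := cfc (fun t => Real.sqrt (cut (δ'/4) t)) (b : Unitization ℂ A)
    with hchalf_def
  have hchalfsa : IsSelfAdjoint chalf := cfc_predicate _ _
  set C : Unitization ℂ A := cfc (cut (δ'/4)) (b : Unitization ℂ A) with hC_def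
  have hcc : chalf * chalf = C := by
    rw [hchalf_def, hC_def, ← cfc_mul _ _ (b : Unitization ℂ A)
      (hscutc (δ'/4)).continuousOn (hscutc (δ'/4)).continuousOn]
    exact cfc_congr fun t _ => Real.mul_self_sqrt (hcut0 _ t)
  have hfac : N = chalf * Zb := by
    rw [hN_def, hchalf_def, hZb_def, ← cfc_mul _ ζ (b : Unitization ℂ A)
      (hscutc (δ'/4)).continuousOn hζc.continuousOn]
    refine cfc_congr fun t _ => ?_
    try dsimp only
    rcases le_or_gt (δ'/2) t with h | h
    · have h1 : max (t - δ'/4) (δ'/4) = t - δ'/4 := max_eq_left (by linarith)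
      have h2 : cut (δ'/4) t = t - δ'/4 := by
        rw [hcut_def]; exact max_eq_left (by linarith)
      rw [hζ_def]
      dsimp only
      rw [hden2_def]
      dsimp only
      rw [h1, h2, mul_comm, div_mul_cancel₀]
      exact (Real.sqrt_pos.mpr (by linarith)).ne'
    · have h3 : η t = 0 := by
        rw [hη_def]
        dsimp only
        have h4 : cut (δ'/2) t = 0 := by
          rw [hcut_def]; exact max_eq_right (by linarith)
        rw [h4, mul_zero]
        exact min_eq_left zero_le_one
      rw [hζ_def]
      dsimp only
      rw [h3, zero_div, mul_zero]
  -- assemble the identity in the unitization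
  set w : Unitization ℂ A := Zb * v with hw_def
  have hvw : v = chalf * w := by
    rw [hw_def, ← mul_assoc, ← hfac, hNv]
  have hfinalW : cfc (cut ε) (a : Unitization ℂ A) = star w * C * w := by
    calc cfc (cut ε) (a : Unitization ℂ A) = Q * Q := hQQ.symm
      _ = star v * v := hvP.symm
      _ = star w * (chalf * chalf) * w := by
          rw [hvw, star_mul, hchalfsa.star_eq]
          simp only [mul_assoc]
      _ = star w * C * w := by rw [hcc]
  -- membership of w in the range of the inclusion A → A⁺¹
  have hidealL : ∀ (y : Unitization ℂ A) (x : A), y * (x : Unitization ℂ A)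
      ∈ Set.range ((↑) : A → Unitization ℂ A) := by
    intro y x
    refine ⟨y.fst • x + y.snd * x, ?_⟩
    rw [Unitization.inr_add, Unitization.inr_mul]
    nth_rewrite 3 [← Unitization.inl_fst_add_inr_snd_eq y]
    rw [add_mul, Unitization.inl_mul_inr]
  have hidealR : ∀ (y : Unitization ℂ A) (x : A), (x : Unitization ℂ A) * y
      ∈ Set.range ((↑) : A → Unitization ℂ A) := by
    intro y x
    obtain ⟨x', hx'⟩ := hidealL (star y) (star x)
    refine ⟨star x', ?_⟩
    rw [Unitization.inr_star, hx']
    simp [star_mul, Unitization.inr_star]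
  have hSclosed : IsClosed (Set.range ((↑) : A → Unitization ℂ A)) :=
    (Unitization.isometry_inr (𝕜 := ℂ) (A := A)).isClosedEmbedding.isClosed_range
  -- s is the image of an element of A
  have hs_mem : s ∈ Set.range ((↑) : A → Unitization ℂ A) := by
    refine ⟨cfcₙ (fun t => Real.sqrt (cut δ' t)) b, ?_⟩
    have h0 : (fun t => Real.sqrt (cut δ' t)) 0 = 0 := by
      have hc0 : cut δ' 0 = 0 := by
        rw [hcut_def]; dsimp only; rw [max_eq_right]; linarith
      simp [hc0]
    rw [Unitization.real_cfcₙ_eq_cfc_inr b _ h0]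
  have hv_mem : v ∈ Set.range ((↑) : A → Unitization ℂ A) := by
    refine hSclosed.closure_subset_iff.mpr ?_ hvmem
    rintro - ⟨y, rfl⟩
    obtain ⟨sA, hsA⟩ := hs_mem
    show z * y ∈ _
    rw [hz_def, ← hsA, mul_assoc]
    exact hidealR _ _
  have hw_mem : w ∈ Set.range ((↑) : A → Unitization ℂ A) := by
    obtain ⟨vA, hvA⟩ := hv_mem
    rw [hw_def, ← hvA]
    exact hidealL _ _
  obtain ⟨xA, hxA⟩ := hw_mem
  -- pull the identity back to A
  refine ⟨δ'/4, by positivity, xA, ?_⟩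
  have hcutA : ((cutDown a ε : A) : Unitization ℂ A) = cfc (cut ε) (a : Unitization ℂ A) := by
    rw [cutDown, Unitization.real_cfcₙ_eq_cfc_inr a _ (by rw [max_eq_right (by linarith)])]
  have hcutB : ((cutDown b (δ'/4) : A) : Unitization ℂ A) = C := by
    rw [cutDown, hC_def, Unitization.real_cfcₙ_eq_cfc_inr b _ (by rw [max_eq_right (by linarith)])]
  apply Unitization.inr_injective (R := ℂ)
  rw [Unitization.inr_mul, Unitization.inr_mul, Unitization.inr_star, hxA, hcutA, hcutB]
  exact hfinalW
end

section
/- Let A be a C*-algebra, a, a' ∈ A₊ with ‖a − a'‖ < ε. Then there exists a contraction x ∈ A with (a'−ε)₊ = x* a x. -/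
open scoped CStarAlgebra

section Aux
variable {B : Type*} [CStarAlgebra B] [PartialOrder B] [StarOrderedRing B]

lemma aux_conj_norm_le {S C bb : B} {δ : ℝ} (hδ : 0 < δ) (hS : IsSelfAdjoint S)
    (hSS : S * S = bb) (hbb : 0 ≤ δ • bb) (hC : 0 ≤ C) (hkey : δ • bb ≤ C) (k : ℝ → ℝ)
    (hk : ∀ u ∈ spectrum ℝ C, 0 ≤ k u) (hkc : ContinuousOn k (spectrum ℝ C)) :
    ‖S * cfc k C * S‖ ≤ δ⁻¹ * ‖cfc (fun u => u * k u) C‖ := by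
  have hCsa : IsSelfAdjoint C := .of_nonneg hC
  have hkc2 : ContinuousOn (fun u => Real.sqrt (k u)) (spectrum ℝ C) :=
    Real.continuous_sqrt.comp_continuousOn hkc
  set k2 : B := cfc (fun u => Real.sqrt (k u)) C with hk2def
  have hk2 : 0 ≤ k2 := cfc_nonneg fun u _ => Real.sqrt_nonneg _
  have hk2sa : IsSelfAdjoint k2 := .of_nonneg hk2
  have hk2k2 : k2 * k2 = cfc k C := by
    rw [hk2def, ← cfc_mul _ _ C hkc2 hkc2]
    exact cfc_congr fun u hu => Real.mul_self_sqrt (hk u hu)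
  have hmid : cfc (fun u => Real.sqrt (k u) * u * Real.sqrt (k u)) C = k2 * C * k2 := by
    rw [cfc_mul (fun u => Real.sqrt (k u) * u) _ C (hkc2.mul (continuousOn_id' _)) hkc2,
      cfc_mul (fun u => Real.sqrt (k u)) (fun u => u) C hkc2 (continuousOn_id' _), cfc_id' ℝ C hCsa]
  have key1 : S * cfc k C * S = star (k2 * S) * (k2 * S) := by
    simp only [star_mul, hS.star_eq, hk2sa.star_eq]
    rw [← hk2k2]; simp only [mul_assoc]
  have key2 : (k2 * S) * star (k2 * S) = k2 * bb * k2 := by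
    simp only [star_mul, hS.star_eq, hk2sa.star_eq, ← hSS]; simp only [mul_assoc]
  have hnorm1 : ‖S * cfc k C * S‖ = ‖k2 * bb * k2‖ := by
    rw [key1, ← key2, CStarRing.norm_star_mul_self, CStarRing.norm_self_mul_star]
  have hconj : δ • (k2 * bb * k2) ≤ k2 * C * k2 := by
    calc δ • (k2 * bb * k2) = star k2 * (δ • bb) * k2 := by
          rw [hk2sa.star_eq, mul_smul_comm, smul_mul_assoc]
        _ ≤ star k2 * C * k2 := star_left_conjugate_le_conjugate hkey k2
        _ = k2 * C * k2 := by rw [hk2sa.star_eq]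
  have hpos : 0 ≤ δ • (k2 * bb * k2) := by
    have : δ • (k2 * bb * k2) = star k2 * (δ • bb) * k2 := by
      rw [hk2sa.star_eq, mul_smul_comm, smul_mul_assoc]
    rw [this]; exact star_left_conjugate_nonneg hbb k2
  have hCk : k2 * C * k2 = cfc (fun u => u * k u) C := by
    rw [← hmid]
    exact cfc_congr fun u hu => by
      rw [mul_comm (Real.sqrt (k u)) u, mul_assoc, Real.mul_self_sqrt (hk u hu)]
  have hnle : ‖δ • (k2 * bb * k2)‖ ≤ ‖cfc (fun u => u * k u) C‖ := by
    rw [← hCk]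
    exact CStarAlgebra.norm_le_norm_of_nonneg_of_le hpos hconj
  rw [hnorm1]
  rw [norm_smul, Real.norm_eq_abs, abs_of_pos hδ] at hnle
  calc ‖k2 * bb * k2‖ = δ⁻¹ * (δ * ‖k2 * bb * k2‖) := by field_simp
    _ ≤ δ⁻¹ * ‖cfc (fun u => u * k u) C‖ := by
        exact mul_le_mul_of_nonneg_left hnle (by positivity)

lemma aux_norm_le_one {S C bb : B} (hS : IsSelfAdjoint S) (hSS : S * S = bb)
    (hC : 0 ≤ C) (hbb2 : bb * bb ≤ C) {t : ℝ} (ht : 0 < t) :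
    ‖S * cfc (fun u => (Real.sqrt (u + t))⁻¹) C * S‖ ≤ 1 := by
  have hCsa : IsSelfAdjoint C := .of_nonneg hC
  have hspec : ∀ u ∈ spectrum ℝ C, 0 ≤ u := spectrum_nonneg_of_nonneg hC
  have hbase : ContinuousOn (fun u : ℝ => Real.sqrt (u + t)) (spectrum ℝ C) :=
    (Real.continuous_sqrt.comp (continuous_add_right t)).continuousOn
  have hne : ∀ u ∈ spectrum ℝ C, Real.sqrt (u + t) ≠ 0 := fun u hu =>
    ne_of_gt (Real.sqrt_pos.mpr (by linarith [hspec u hu]))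
  have hgc : ContinuousOn (fun u : ℝ => (Real.sqrt (u + t))⁻¹) (spectrum ℝ C) :=
    ContinuousOn.inv₀ hbase hne
  set g : ℝ → ℝ := fun u => (Real.sqrt (u + t))⁻¹ with hgdef
  have hgnn : ∀ u, 0 ≤ g u := fun u => inv_nonneg.mpr (Real.sqrt_nonneg _)
  set G : B := cfc g C with hGdef
  have hG : 0 ≤ G := cfc_nonneg fun u _ => hgnn u
  have hGsa : IsSelfAdjoint G := .of_nonneg hG
  have hhc : ContinuousOn (fun u => Real.sqrt (g u)) (spectrum ℝ C) :=
    Real.continuous_sqrt.comp_continuousOn hgc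
  set h : B := cfc (fun u => Real.sqrt (g u)) C with hhdef
  have hh : 0 ≤ h := cfc_nonneg fun u _ => Real.sqrt_nonneg _
  have hhsa : IsSelfAdjoint h := .of_nonneg hh
  have hhh : h * h = G := by
    rw [hhdef, hGdef, ← cfc_mul _ _ C hhc hhc]
    exact cfc_congr fun u _ => Real.mul_self_sqrt (hgnn u)
  have hbbsa : IsSelfAdjoint bb := hSS ▸ (by rw [IsSelfAdjoint, star_mul, hS.star_eq])
  have hbbnn : 0 ≤ bb := hSS ▸ (by simpa [hS.star_eq] using star_mul_self_nonneg S)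
  -- ‖S * G * S‖ = ‖h * bb * h‖
  have key1 : S * G * S = star (h * S) * (h * S) := by
    simp only [star_mul, hS.star_eq, hhsa.star_eq]
    rw [← hhh]; simp only [mul_assoc]
  have key2 : (h * S) * star (h * S) = h * bb * h := by
    simp only [star_mul, hS.star_eq, hhsa.star_eq, ← hSS]; simp only [mul_assoc]
  have hnorm1 : ‖S * G * S‖ = ‖h * bb * h‖ := by
    rw [key1, ← key2, CStarRing.norm_star_mul_self, CStarRing.norm_self_mul_star]
  rw [hnorm1]
  rcases eq_or_ne (h * bb * h) 0 with hz | hz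
  · simp [hz]
  have : Nontrivial B := ⟨_, 0, hz⟩
  have hpos : 0 ≤ h * bb * h := by
    simpa [hhsa.star_eq] using star_left_conjugate_nonneg hbbnn h
  have hν : ‖h * bb * h‖ ∈ spectrum ℝ (h * bb * h) :=
    CStarAlgebra.norm_mem_spectrum_of_nonneg hpos
  have hν0 : ‖h * bb * h‖ ≠ 0 := norm_ne_zero_iff.mpr hz
  have hswap : ‖h * bb * h‖ ∈ spectrum ℝ (G * bb) := by
    have h1 : ‖h * bb * h‖ ∈ spectrum ℝ ((h * bb) * h) \ {0} := ⟨hν, hν0⟩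
    rw [spectrum.nonzero_mul_comm] at h1
    have : h * (h * bb) = G * bb := by rw [← mul_assoc, hhh]
    rw [this] at h1
    exact h1.1
  have hle1 : ‖h * bb * h‖ ≤ ‖G * bb‖ := by
    have := spectrum.norm_le_norm_of_mem hswap
    rwa [Real.norm_of_nonneg (norm_nonneg _)] at this
  -- ‖G * bb‖ ≤ 1
  have hE : bb * bb ≤ cfc (fun u => u + t) C := by
    have hEeq : cfc (fun u : ℝ => u + t) C = C + algebraMap ℝ B t := by
      rw [cfc_add C (fun u : ℝ => u) (fun _ => t) (continuousOn_id' _) continuousOn_const,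
        cfc_id' ℝ C hCsa, cfc_const t C hCsa]
    have halg : 0 ≤ algebraMap ℝ B t := by
      rw [← cfc_const t C hCsa]
      exact cfc_nonneg fun u _ => ht.le
    rw [hEeq]
    exact hbb2.trans (le_add_of_nonneg_right halg)
  have hGEG : G * cfc (fun u => u + t) C * G = 1 := by
    have c1 : ContinuousOn (fun u : ℝ => u + t) (spectrum ℝ C) :=
      (continuous_add_right t).continuousOn
    rw [hGdef, ← cfc_mul _ _ C hgc c1, ← cfc_mul (fun x => g x * (x + t)) _ C (hgc.mul c1) hgc]
    rw [show (1 : B) = cfc (fun _ : ℝ => (1:ℝ)) C by rw [cfc_const 1 C hCsa, map_one]]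
    exact cfc_congr fun u hu => by
      have h1 : Real.sqrt (u + t) * Real.sqrt (u + t) = u + t :=
        Real.mul_self_sqrt (by linarith [hspec u hu])
      have hsu : Real.sqrt (u + t) ≠ 0 := hne u hu
      simp only [hgdef]
      rw [← h1]
      field_simp
      rw [Real.sqrt_sq (Real.sqrt_nonneg _)]
  have hGbb2 : ‖G * bb‖ ^ 2 ≤ 1 := by
    have e1 : ‖G * bb‖ ^ 2 = ‖G * (bb * bb) * G‖ := by
      rw [sq, ← CStarRing.norm_self_mul_star (x := G * bb)]
      congr 1
      simp only [star_mul, hGsa.star_eq, hbbsa.star_eq, mul_assoc]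
    have e2 : 0 ≤ G * (bb * bb) * G := by
      have hbb2nn : (0:B) ≤ bb * bb := by
        simpa [hbbsa.star_eq] using star_mul_self_nonneg bb
      simpa [hGsa.star_eq] using star_left_conjugate_nonneg hbb2nn G
    have e3 : G * (bb * bb) * G ≤ 1 := by
      calc G * (bb * bb) * G = star G * (bb * bb) * G := by rw [hGsa.star_eq]
        _ ≤ star G * cfc (fun u => u + t) C * G := star_left_conjugate_le_conjugate hE G
        _ = 1 := by rw [hGsa.star_eq, hGEG]
    rw [e1]
    exact (CStarAlgebra.norm_le_one_iff_of_nonneg _ e2).mpr e3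
  have hGbb : ‖G * bb‖ ≤ 1 := by nlinarith [norm_nonneg (G * bb)]
  exact hle1.trans hGbb

end Aux

lemma aux_real_est {t r u : ℝ} (ht : 0 < t) (htr : t ≤ r) (hu : 0 ≤ u) :
    u * ((Real.sqrt (u + t))⁻¹ - (Real.sqrt (u + r))⁻¹) ≤ Real.sqrt r := by
  set p := Real.sqrt (u + t) with hpdef
  set q := Real.sqrt (u + r) with hqdef
  have hp : 0 < p := Real.sqrt_pos.mpr (by linarith)
  have hq : 0 < q := Real.sqrt_pos.mpr (by linarith)
  have hp2 : p * p = u + t := Real.mul_self_sqrt (by linarith)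
  have hq2 : q * q = u + r := Real.mul_self_sqrt (by linarith)
  have hpq : p ≤ q := Real.sqrt_le_sqrt (by linarith)
  have hr0 : 0 < r := lt_of_lt_of_le ht htr
  have hsr : 0 < Real.sqrt r := Real.sqrt_pos.mpr hr0
  have hsr2 : Real.sqrt r * Real.sqrt r = r := Real.mul_self_sqrt hr0.le
  have hsrq : Real.sqrt r ≤ q := Real.sqrt_le_sqrt (by linarith)
  have hupq : u ≤ p * q := by nlinarith
  have h1 : u * (p⁻¹ - q⁻¹) = u * (q - p) / (p * q) := by
    field_simp
  have h3 : r - t ≤ Real.sqrt r * q := by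
    have := mul_le_mul_of_nonneg_left hsrq hsr.le
    rw [hsr2] at this
    linarith
  rw [h1, div_le_iff₀ (by positivity)]
  -- u * (q - p) ≤ √r * (p * q), multiply by (q + p) > 0
  rw [← mul_le_mul_iff_of_pos_right (show (0:ℝ) < q + p by positivity)]
  have h2 : u * (q - p) * (q + p) = u * (r - t) := by nlinarith [hp2, hq2]
  rw [h2]
  calc u * (r - t) ≤ (p * q) * (r - t) := by nlinarith
    _ ≤ (p * q) * (Real.sqrt r * q) := mul_le_mul_of_nonneg_left h3 (by positivity)
    _ ≤ Real.sqrt r * (p * q) * (q + p) := by nlinarith [mul_pos (mul_pos hsr hp) (mul_pos hq hp)]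

set_option maxHeartbeats 2000000 in
/-- **Kirchberg–Rørdam, Lemma 2.2:** if `a, a'` are positive with `‖a − a'‖ < ε`, then
there is a contraction `x` with `(a' − ε)₊ = x* a x`. -/
theorem kirchberg_rordam {A : Type*} [NonUnitalCStarAlgebra A] [PartialOrder A]
    [StarOrderedRing A] (a a' : A) (ha : 0 ≤ a) (ha' : 0 ≤ a')
    (ε : ℝ) (hε : ‖a - a'‖ < ε) :
    ∃ x : A, ‖x‖ ≤ 1 ∧ cutDown a' ε = star x * a * x := by
  have hr0 : (0:ℝ) ≤ ‖a - a'‖ := norm_nonneg _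
  set r : ℝ := ‖a - a'‖ with hrdef
  set δ : ℝ := ε - r with hδdef
  have hδ : 0 < δ := sub_pos.mpr hε
  have hε0 : 0 < ε := lt_of_le_of_lt hr0 hε
  -- basic elements of A
  set f₀ : ℝ → ℝ := fun u => max (u - ε) 0 with hf₀def
  set f : ℝ → ℝ := fun u => Real.sqrt (max (u - ε) 0) with hfdef
  have hf₀c : Continuous f₀ := by fun_prop
  have hfc : Continuous f := Real.continuous_sqrt.comp hf₀c
  have hf₀0 : f₀ 0 = 0 := by
    show max (0 - ε) 0 = 0
    rw [max_eq_right (by linarith)]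
  have hf0 : f 0 = 0 := by
    show Real.sqrt (max (0 - ε) 0) = 0
    rw [max_eq_right (by linarith), Real.sqrt_zero]
  have hf₀nn : ∀ u, 0 ≤ f₀ u := fun u => le_max_right _ _
  set b : A := cfcₙ f₀ a' with hbdef
  have hcut : cutDown a' ε = b := rfl
  set s : A := cfcₙ f a' with hsdef
  have hb : 0 ≤ b := cfcₙ_nonneg fun u _ => hf₀nn u
  have hs : 0 ≤ s := cfcₙ_nonneg fun u _ => Real.sqrt_nonneg _
  have hssa : IsSelfAdjoint s := .of_nonneg hs
  have hff : (fun u => f u * f u) = f₀ := funext fun u => Real.mul_self_sqrt (hf₀nn u)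
  have hss : s * s = b := by
    rw [hsdef, hbdef, ← cfcₙ_mul f f a' hfc.continuousOn hf0 hfc.continuousOn hf0, hff]
  have hsas : s * a' * s = b * b + ε • b := by
    have h1 : cfcₙ (fun u => f u * u) a' = s * a' := by
      rw [cfcₙ_mul f (fun u => u) a' hfc.continuousOn hf0 (continuousOn_id' _) rfl,
        cfcₙ_id' ℝ a']
    have h2 : cfcₙ (fun u => (f u * u) * f u) a' = (s * a') * s := by
      rw [cfcₙ_mul (fun u => f u * u) f a' ((hfc.continuousOn).mul (continuousOn_id' _)) (by simp [hf0])
        hfc.continuousOn hf0, h1]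
    have h3 : cfcₙ (fun u => f₀ u * f₀ u + ε • f₀ u) a' = b * b + ε • b := by
      rw [cfcₙ_add (fun u => f₀ u * f₀ u) (fun u => ε • f₀ u) a'
        ((hf₀c.continuousOn).mul hf₀c.continuousOn) (by simp [hf₀0])
        (hf₀c.continuousOn.const_smul ε) (by simp [hf₀0]),
        cfcₙ_mul f₀ f₀ a' hf₀c.continuousOn hf₀0 hf₀c.continuousOn hf₀0,
        cfcₙ_smul ε f₀ a' hf₀c.continuousOn hf₀0]
    rw [← h2, ← h3]
    congr 1
    funext u
    simp only [hf₀def, hfdef, smul_eq_mul]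
    rcases le_total u ε with h | h
    · rw [max_eq_right (by linarith)]
      simp
    · have hmax : (u - ε) ⊔ 0 = u - ε := max_eq_left (by linarith)
      rw [hmax]
      have hs2 : Real.sqrt (u - ε) * Real.sqrt (u - ε) = u - ε :=
        Real.mul_self_sqrt (by linarith)
      nlinarith [hs2]
  -- move to the unitization
  set c : A := s * a * s with hcdef
  have hc : 0 ≤ c := by
    have := star_left_conjugate_nonneg ha s
    rwa [hssa.star_eq] at this
  set Sb : A⁺¹ := (s : A⁺¹) with hSbdef
  set Bb : A⁺¹ := (b : A⁺¹) with hBbdef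
  set C : A⁺¹ := (c : A⁺¹) with hCdef
  have hSb_sa : IsSelfAdjoint Sb := .of_nonneg (Unitization.inr_nonneg_iff.mpr hs)
  have hSS : Sb * Sb = Bb := by rw [hSbdef, hBbdef, ← Unitization.inr_mul, hss]
  have hBb : 0 ≤ Bb := Unitization.inr_nonneg_iff.mpr hb
  have hBbsa : IsSelfAdjoint Bb := .of_nonneg hBb
  have hC : 0 ≤ C := Unitization.inr_nonneg_iff.mpr hc
  have hδbA : 0 ≤ δ • b := by
    rw [hbdef, ← cfcₙ_smul δ f₀ a' hf₀c.continuousOn hf₀0]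
    exact cfcₙ_nonneg fun u _ => smul_nonneg hδ.le (hf₀nn u)
  have hδb : 0 ≤ δ • Bb := by
    rw [hBbdef, ← Unitization.inr_smul]
    exact Unitization.inr_nonneg_iff.mpr hδbA
  have hBb2nn : 0 ≤ Bb * Bb := by
    have := star_mul_self_nonneg Bb
    rwa [hBbsa.star_eq] at this
  -- the key inequality
  have KEY : Bb * Bb + δ • Bb ≤ C := by
    have hsaA : IsSelfAdjoint (a' - a) := ((IsSelfAdjoint.of_nonneg ha').sub (.of_nonneg ha))
    have hsa1 : IsSelfAdjoint ((a' - a : A) : A⁺¹) := by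
      rw [IsSelfAdjoint, ← Unitization.inr_star, hsaA.star_eq]
    have hnorm : ‖((a' - a : A) : A⁺¹)‖ = r := by
      rw [Unitization.norm_inr, hrdef, norm_sub_rev]
    have h1 : ((a' : A⁺¹)) ≤ (a : A⁺¹) + algebraMap ℝ A⁺¹ r := by
      have := hsa1.le_algebraMap_norm_self
      rw [hnorm, Unitization.inr_sub] at this
      exact sub_le_iff_le_add'.mp this
    have h2 := star_left_conjugate_le_conjugate h1 Sb
    rw [hSb_sa.star_eq] at h2
    have hLHS : Sb * (a' : A⁺¹) * Sb = Bb * Bb + ε • Bb := by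
      rw [hSbdef, ← Unitization.inr_mul, ← Unitization.inr_mul, hsas, hBbdef,
        Unitization.inr_add, Unitization.inr_mul, Unitization.inr_smul]
    have hRHS : Sb * ((a : A⁺¹) + algebraMap ℝ A⁺¹ r) * Sb = C + r • Bb := by
      rw [mul_add, add_mul, hCdef, hcdef, ← Unitization.inr_mul, ← Unitization.inr_mul]
      congr 1
      rw [Algebra.algebraMap_eq_smul_one, mul_smul_comm, smul_mul_assoc, mul_one, hSS]
    rw [hLHS, hRHS] at h2
    have hsplit : ε • Bb = δ • Bb + r • Bb := by
      rw [← add_smul]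
      congr 1
      rw [hδdef]; ring
    rw [hsplit, ← add_assoc] at h2
    exact le_of_add_le_add_right h2
  have hkey2 : δ • Bb ≤ C := le_trans (le_add_of_nonneg_left hBb2nn) KEY
  have hbb2 : Bb * Bb ≤ C := le_trans (le_add_of_nonneg_right hδb) KEY
  -- the approximating family
  set X : ℝ → A⁺¹ := fun t => Sb * cfc (fun u : ℝ => (Real.sqrt (u + t))⁻¹) C * Sb with hXdef
  have hspecC : ∀ u ∈ spectrum ℝ C, 0 ≤ u := spectrum_nonneg_of_nonneg hC
  have hCsa : IsSelfAdjoint C := .of_nonneg hC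
  have hgc : ∀ t : ℝ, 0 < t →
      ContinuousOn (fun u : ℝ => (Real.sqrt (u + t))⁻¹) (spectrum ℝ C) := fun t ht =>
    ContinuousOn.inv₀ ((Real.continuous_sqrt.comp (continuous_add_right t)).continuousOn)
      (fun u hu => ne_of_gt (Real.sqrt_pos.mpr (by linarith [hspecC u hu])))
  have hXnorm : ∀ t : ℝ, 0 < t → ‖X t‖ ≤ 1 := fun t ht => aux_norm_le_one hSb_sa hSS hC hbb2 ht
  have hSaS : Sb * (a : A⁺¹) * Sb = C := by
    rw [hSbdef, hCdef, hcdef]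
    simp [Unitization.inr_mul]
  have hXsa : ∀ t : ℝ, 0 < t → star (X t) = X t := by
    intro t ht
    have hM : IsSelfAdjoint (cfc (fun u : ℝ => (Real.sqrt (u + t))⁻¹) C) :=
      .of_nonneg (cfc_nonneg fun u _ => by positivity)
    simp only [hXdef, star_mul, hSb_sa.star_eq, hM.star_eq, mul_assoc]
  -- error estimate
  have hXerr : ∀ t : ℝ, 0 < t → ‖star (X t) * (a : A⁺¹) * X t - Bb‖ ≤ δ⁻¹ * t := by
    intro t ht
    have hgct := hgc t ht
    have hmid : cfc (fun u : ℝ => (Real.sqrt (u + t))⁻¹ * u * (Real.sqrt (u + t))⁻¹) C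
        = cfc (fun u : ℝ => (Real.sqrt (u + t))⁻¹) C * C
          * cfc (fun u : ℝ => (Real.sqrt (u + t))⁻¹) C := by
      rw [cfc_mul (fun u : ℝ => (Real.sqrt (u + t))⁻¹ * u) _ C (hgct.mul (continuousOn_id' _)) hgct,
        cfc_mul (fun u : ℝ => (Real.sqrt (u + t))⁻¹) (fun u => u) C hgct (continuousOn_id' _),
        cfc_id' ℝ C hCsa]
    have hexpand : star (X t) * (a : A⁺¹) * X t
        = Sb * cfc (fun u : ℝ => (Real.sqrt (u + t))⁻¹ * u * (Real.sqrt (u + t))⁻¹) C * Sb := by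
      rw [hXsa t ht, hmid]
      simp only [hXdef, ← hSaS]
      simp only [mul_assoc]
    set k : ℝ → ℝ := fun u => 1 - (Real.sqrt (u + t))⁻¹ * u * (Real.sqrt (u + t))⁻¹ with hkdef
    have hkc : ContinuousOn k (spectrum ℝ C) :=
      continuousOn_const.sub ((hgct.mul (continuousOn_id' _)).mul hgct)
    have hkval : ∀ u ∈ spectrum ℝ C, k u = t / (u + t) := by
      intro u hu
      have hut : 0 < u + t := by linarith [hspecC u hu]
      have hsq : Real.sqrt (u + t) * Real.sqrt (u + t) = u + t := Real.mul_self_sqrt hut.le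
      have hne' : Real.sqrt (u + t) ≠ 0 := by positivity
      rw [hkdef]
      field_simp
      rw [Real.sq_sqrt hut.le]; ring
    have hknn : ∀ u ∈ spectrum ℝ C, 0 ≤ k u := by
      intro u hu
      rw [hkval u hu]
      have hut : 0 < u + t := by linarith [hspecC u hu]
      positivity
    have hsub : Bb - star (X t) * (a : A⁺¹) * X t = Sb * cfc k C * Sb := by
      have h1 : cfc k C = cfc (fun _ : ℝ => (1:ℝ)) C
          - cfc (fun u : ℝ => (Real.sqrt (u + t))⁻¹ * u * (Real.sqrt (u + t))⁻¹) C := by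
        rw [← cfc_sub (fun _ : ℝ => (1:ℝ))
          (fun u : ℝ => (Real.sqrt (u + t))⁻¹ * u * (Real.sqrt (u + t))⁻¹) C
          continuousOn_const ((hgct.mul (continuousOn_id' _)).mul hgct)]
      have h2 : Sb * cfc (fun _ : ℝ => (1:ℝ)) C * Sb = Bb := by
        rw [cfc_const 1 C hCsa, map_one, mul_one, hSS]
      rw [hexpand, h1, mul_sub, sub_mul, h2]
    have hbound := aux_conj_norm_le hδ hSb_sa hSS hδb hC hkey2 k hknn hkc
    have hcfc_norm : ‖cfc (fun u => u * k u) C‖ ≤ t := by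
      apply norm_cfc_le ht.le
      intro u hu
      rw [hkval u hu]
      have hu0 := hspecC u hu
      have hut : 0 < u + t := by linarith
      rw [Real.norm_eq_abs, abs_of_nonneg (by positivity)]
      have heq : u * (t / (u + t)) = t * u / (u + t) := by ring
      rw [heq, div_le_iff₀ hut]
      nlinarith
    calc ‖star (X t) * (a : A⁺¹) * X t - Bb‖ = ‖Sb * cfc k C * Sb‖ := by
          rw [← norm_neg, neg_sub, hsub]
      _ ≤ δ⁻¹ * ‖cfc (fun u => u * k u) C‖ := hbound
      _ ≤ δ⁻¹ * t := mul_le_mul_of_nonneg_left hcfc_norm (by positivity)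
  -- Cauchy estimate
  have hXdiff : ∀ t r' : ℝ, 0 < t → t ≤ r' → ‖X t - X r'‖ ≤ δ⁻¹ * Real.sqrt r' := by
    intro t r' ht htr
    have hr' : 0 < r' := lt_of_lt_of_le ht htr
    have hgct := hgc t ht
    have hgcr := hgc r' hr'
    set k : ℝ → ℝ := fun u => (Real.sqrt (u + t))⁻¹ - (Real.sqrt (u + r'))⁻¹ with hkdef
    have hkc : ContinuousOn k (spectrum ℝ C) := hgct.sub hgcr
    have hknn : ∀ u ∈ spectrum ℝ C, 0 ≤ k u := by
      intro u hu
      have hu0 := hspecC u hu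
      have h1 : Real.sqrt (u + t) ≤ Real.sqrt (u + r') := Real.sqrt_le_sqrt (by linarith)
      have h2 : 0 < Real.sqrt (u + t) := Real.sqrt_pos.mpr (by linarith)
      simp only [hkdef, sub_nonneg]
      exact inv_anti₀ h2 h1
    have hsub : X t - X r' = Sb * cfc k C * Sb := by
      have h1 : cfc k C = cfc (fun u : ℝ => (Real.sqrt (u + t))⁻¹) C
          - cfc (fun u : ℝ => (Real.sqrt (u + r'))⁻¹) C :=
        cfc_sub _ _ C hgct hgcr
      simp only [hXdef, h1, mul_sub, sub_mul]
    have hbound := aux_conj_norm_le hδ hSb_sa hSS hδb hC hkey2 k hknn hkc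
    have hcfc_norm : ‖cfc (fun u => u * k u) C‖ ≤ Real.sqrt r' := by
      apply norm_cfc_le (Real.sqrt_nonneg r')
      intro u hu
      have hu0 := hspecC u hu
      rw [Real.norm_eq_abs, abs_of_nonneg (mul_nonneg hu0 (hknn u hu))]
      exact aux_real_est ht htr hu0
    rw [hsub]
    calc ‖Sb * cfc k C * Sb‖ ≤ δ⁻¹ * ‖cfc (fun u => u * k u) C‖ := hbound
      _ ≤ δ⁻¹ * Real.sqrt r' := mul_le_mul_of_nonneg_left hcfc_norm (by positivity)
  -- the approximating sequence in A
  have hfst : ∀ t : ℝ, (X t).fst = 0 := by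
    intro t
    simp [hXdef, hSbdef, Unitization.fst_mul, Unitization.fst_inr]
  have hinr : ∀ t : ℝ, ((X t).snd : A⁺¹) = X t := by
    intro t
    conv_rhs => rw [← Unitization.inl_fst_add_inr_snd_eq (X t)]
    rw [hfst t, Unitization.inl_zero, zero_add]
  set tseq : ℕ → ℝ := fun n => 1 / (n + 1) with htseq
  have htpos : ∀ n, 0 < tseq n := fun n => by positivity
  set xa : ℕ → A := fun n => (X (tseq n)).snd with hxa
  have hxainr : ∀ n, ((xa n : A) : A⁺¹) = X (tseq n) := fun n => hinr _
  have hdist : ∀ n m : ℕ, dist (xa n) (xa m) = ‖X (tseq n) - X (tseq m)‖ := by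
    intro n m
    rw [dist_eq_norm, ← Unitization.norm_inr (𝕜 := ℂ), Unitization.inr_sub, hxainr, hxainr]
  have hmono : ∀ {n m : ℕ}, n ≤ m → tseq m ≤ tseq n := by
    intro n m h
    apply one_div_le_one_div_of_le (by positivity)
    have : (n : ℝ) ≤ m := Nat.cast_le.mpr h
    linarith
  have hb' : ∀ n m N : ℕ, N ≤ n → N ≤ m → dist (xa n) (xa m) ≤ δ⁻¹ * Real.sqrt (tseq N) := by
    intro n m N hn hm
    rw [hdist]
    rcases le_total (tseq n) (tseq m) with h | h
    · calc ‖X (tseq n) - X (tseq m)‖ ≤ δ⁻¹ * Real.sqrt (tseq m) := hXdiff _ _ (htpos n) h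
        _ ≤ δ⁻¹ * Real.sqrt (tseq N) :=
            mul_le_mul_of_nonneg_left (Real.sqrt_le_sqrt (hmono hm)) (by positivity)
    · rw [norm_sub_rev]
      calc ‖X (tseq m) - X (tseq n)‖ ≤ δ⁻¹ * Real.sqrt (tseq n) := hXdiff _ _ (htpos m) h
        _ ≤ δ⁻¹ * Real.sqrt (tseq N) :=
            mul_le_mul_of_nonneg_left (Real.sqrt_le_sqrt (hmono hn)) (by positivity)
  have htend : Filter.Tendsto (fun N : ℕ => δ⁻¹ * Real.sqrt (tseq N)) Filter.atTop (nhds 0) := by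
    have h1 : Filter.Tendsto tseq Filter.atTop (nhds 0) := by
      simpa [htseq, one_div] using tendsto_one_div_add_atTop_nhds_zero_nat (𝕜 := ℝ)
    have h2 : Filter.Tendsto (fun N => Real.sqrt (tseq N)) Filter.atTop (nhds 0) := by
      have := (Real.continuous_sqrt.tendsto 0).comp h1
      simpa [Function.comp_def] using this
    simpa using h2.const_mul δ⁻¹
  have hcauchy : CauchySeq xa := cauchySeq_of_le_tendsto_0 _ hb' htend
  obtain ⟨x, hx⟩ := cauchySeq_tendsto_of_complete hcauchy
  refine ⟨x, ?_, ?_⟩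
  · apply le_of_tendsto hx.norm
    filter_upwards with n
    have h1 : ‖xa n‖ = ‖X (tseq n)‖ := by
      rw [← Unitization.norm_inr (𝕜 := ℂ), hxainr]
    rw [h1]
    exact hXnorm _ (htpos n)
  · rw [hcut]
    have hlim1 : Filter.Tendsto (fun n => star (xa n) * a * xa n) Filter.atTop
        (nhds (star x * a * x)) := ((hx.star).mul tendsto_const_nhds).mul hx
    have hlim2 : Filter.Tendsto (fun n => star (xa n) * a * xa n) Filter.atTop (nhds b) := by
      rw [tendsto_iff_norm_sub_tendsto_zero]
      have hub : ∀ n : ℕ, ‖star (xa n) * a * xa n - b‖ ≤ δ⁻¹ * tseq n := by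
        intro n
        have heq : ‖star (xa n) * a * xa n - b‖
            = ‖star (X (tseq n)) * (a : A⁺¹) * X (tseq n) - Bb‖ := by
          rw [← Unitization.norm_inr (𝕜 := ℂ), Unitization.inr_sub, Unitization.inr_mul,
            Unitization.inr_mul, Unitization.inr_star, hxainr, hBbdef]
        rw [heq]
        exact hXerr _ (htpos n)
      have hgt : Filter.Tendsto (fun n : ℕ => δ⁻¹ * tseq n) Filter.atTop (nhds 0) := by
        have h1 : Filter.Tendsto tseq Filter.atTop (nhds 0) := by
          simpa [htseq, one_div] using tendsto_one_div_add_atTop_nhds_zero_nat (𝕜 := ℝ)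
        simpa [htseq] using h1.const_mul δ⁻¹
      exact squeeze_zero (fun n => norm_nonneg _) hub hgt
    exact tendsto_nhds_unique hlim2 hlim1
end
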